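/- arXiv:1911.07285 — 9 statements merged into one kernel-verified Lean document; each statement's English description precedes it below -/
import Mathlib

section
/- Let K be an n×n real symmetric positive definite matrix, P an n×q real matrix of full column rank q with n>q, y∈ℝⁿ, and a>0, b>0. Set G = PᵀK⁻¹P, β̂ = G⁻¹PᵀK⁻¹y, and w = (yᵀK⁻¹y − β̂ᵀGβ̂)/2. Then the marginal likelihood, obtained by integrating the Gaussian likelihood against a flat prior on β and an inverse-Gamma(a,b) prior on σ², satisfies ∫₀^∞ ∫_{ℝ^q} (2πσ²)^{−n/2} det(K)^{−1/2} exp(−(y−Pβ)ᵀK⁻¹(y−Pβ)/(2σ²)) · (b^a/Γ(a)) (σ²)^{−a−1} exp(−b/σ²) dβ d(σ²) = (2π)^{−(n−q)/2} · det(G·K)^{−1/2} · (b^a/Γ(a)) · Γ(a+(n−q)/2) / (b+w)^{a+(n−q)/2}. -/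
open MeasureTheory Matrix

section AuxLemmas
open MeasureTheory Real Set Matrix
open scoped MatrixOrder



lemma int_inv_gamma {s c : ℝ} (hs : 0 < s) (hc : 0 < c) :
    ∫ v in Set.Ioi (0:ℝ), v ^ (-s - 1) * Real.exp (-c / v) = Real.Gamma s / c ^ s := by
  calc ∫ v in Set.Ioi (0:ℝ), v ^ (-s - 1) * Real.exp (-c / v)
      = ∫ x in Set.Ioi (0:ℝ), (|(-1:ℝ)| * x ^ ((-1:ℝ) - 1)) •
          ((fun y : ℝ => y ^ (s-1) * Real.exp (-(c*y))) (x ^ (-1:ℝ))) := by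
        refine setIntegral_congr_fun measurableSet_Ioi (fun x hx => ?_)
        simp only [mem_Ioi] at hx
        rw [smul_eq_mul, abs_neg, abs_one, one_mul]
        simp only
        rw [← Real.rpow_mul hx.le, ← mul_assoc, ← Real.rpow_add hx,
          Real.rpow_neg_one, div_eq_mul_inv, mul_comm c]
        rw [show -s - 1 = -1 - 1 + (-1 * (s-1)) by ring, mul_comm x⁻¹ c, ← neg_mul]
    _ = ∫ y in Set.Ioi (0:ℝ), y ^ (s-1) * Real.exp (-(c*y)) :=
        by exact integral_comp_rpow_Ioi (fun y : ℝ => y ^ (s-1) * Real.exp (-(c*y))) (p := -1) (by norm_num)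
    _ = (1/c) ^ s * Real.Gamma s := Real.integral_rpow_mul_exp_neg_mul_Ioi hs hc
    _ = Real.Gamma s / c ^ s := by
        rw [Real.div_rpow zero_le_one hc.le, Real.one_rpow]; ring

lemma posdef_smul' {q : ℕ} {G : Matrix (Fin q) (Fin q) ℝ} (hG : G.PosDef) {c : ℝ}
    (hc : 0 < c) : (c • G).PosDef := by
  refine Matrix.PosDef.of_dotProduct_mulVec_pos ?_ (fun x hx => ?_)
  · unfold Matrix.IsHermitian
    rw [conjTranspose_smul, hG.1.eq]
    simp
  · rw [smul_mulVec, dotProduct_smul, smul_eq_mul]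
    exact mul_pos hc (hG.dotProduct_mulVec_pos hx)

lemma gauss_int {q : ℕ} {M : Matrix (Fin q) (Fin q) ℝ} (hM : M.PosDef) :
    ∫ x : Fin q → ℝ, Real.exp (-(x ⬝ᵥ M.mulVec x)) =
      Real.pi ^ ((q : ℝ) / 2) * M.det ^ (-(1:ℝ)/2) := by
  set A := CFC.sqrt M with hA
  have hAsym : Aᵀ = A := by
    have := ((Matrix.nonneg_iff_posSemidef (A := A)).mp (CFC.sqrt_nonneg M)).1.eq
    simpa using this
  have hAA : A * A = M := CFC.sqrt_mul_sqrt_self M (Matrix.nonneg_iff_posSemidef.mpr hM.posSemidef)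
  have hdetsq : A.det ^ 2 = M.det := by rw [← hAA, det_mul, sq]
  have hMdet : 0 < M.det := hM.det_pos
  have hdetne : A.det ≠ 0 := by
    intro h; rw [← hdetsq, h] at hMdet; simp at hMdet
  -- quadratic form as sum of squares
  have hquad : ∀ x : Fin q → ℝ, x ⬝ᵥ M.mulVec x = (A.mulVec x) ⬝ᵥ (A.mulVec x) := by
    intro x
    rw [← hAA, ← mulVec_mulVec, dotProduct_mulVec, ← vecMul_transpose, hAsym]
  -- change of variables
  have hf : LinearMap.det (Matrix.toLin' A) ≠ 0 := by rwa [LinearMap.det_toLin']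
  have hmap := Real.map_linearMap_volume_pi_eq_smul_volume_pi hf
  have hcont : Continuous (fun u : Fin q → ℝ => Real.exp (-(u ⬝ᵥ u))) := by
    unfold dotProduct; fun_prop
  have hint : ∫ x : Fin q → ℝ, Real.exp (-((A.mulVec x) ⬝ᵥ (A.mulVec x)))
      = |A.det|⁻¹ * ∫ u : Fin q → ℝ, Real.exp (-(u ⬝ᵥ u)) := by
    have := integral_map (μ := (volume : Measure (Fin q → ℝ)))
      (φ := ⇑(Matrix.toLin' A)) (f := fun u : Fin q → ℝ => Real.exp (-(u ⬝ᵥ u)))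
      ((Matrix.toLin' A).continuous_of_finiteDimensional).aemeasurable
      hcont.aestronglyMeasurable
    rw [hmap, integral_smul_measure] at this
    simp only [Matrix.toLin'_apply, LinearMap.det_toLin'] at this
    rw [ENNReal.toReal_ofReal (by positivity), smul_eq_mul, abs_inv] at this
    exact this.symm
  -- Gaussian product
  have hprod : ∫ u : Fin q → ℝ, Real.exp (-(u ⬝ᵥ u)) = Real.pi ^ ((q : ℝ) / 2) := by
    have h1 : ∀ u : Fin q → ℝ, Real.exp (-(u ⬝ᵥ u)) = ∏ i, Real.exp (-(u i ^ 2)) := by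
      intro u
      rw [← Real.exp_sum]
      congr 1
      rw [dotProduct, ← Finset.sum_neg_distrib]
      exact Finset.sum_congr rfl (fun i _ => by ring_nf)
    simp_rw [h1]
    rw [MeasureTheory.volume_pi, integral_fintype_prod_eq_pow (fun t : ℝ => Real.exp (-(t^2)))]
    have : ∫ t : ℝ, Real.exp (-(t^2)) = Real.sqrt Real.pi := by
      simpa using integral_gaussian 1
    rw [this, Fintype.card_fin, Real.sqrt_eq_rpow, ← Real.rpow_natCast (Real.pi ^ ((1:ℝ)/2)) q,
      ← Real.rpow_mul Real.pi_pos.le]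
    congr 1
    ring
  simp_rw [hquad]
  rw [hint, hprod]
  have habs : |A.det| = M.det ^ ((1:ℝ)/2) := by
    rw [← Real.sqrt_sq_eq_abs, hdetsq, Real.sqrt_eq_rpow]
  rw [habs, ← Real.rpow_neg hMdet.le, show (-(1:ℝ)/2) = -(1/2) by ring]
  ring
lemma gauss_scaled {q : ℕ} {G : Matrix (Fin q) (Fin q) ℝ} (hG : G.PosDef) {v : ℝ}
    (hv : 0 < v) (m : Fin q → ℝ) :
    ∫ β : Fin q → ℝ, Real.exp (-((β - m) ⬝ᵥ G.mulVec (β - m)) / (2*v)) =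
      (2 * Real.pi * v) ^ ((q:ℝ)/2) * G.det ^ (-(1:ℝ)/2) := by
  have h2v : (0:ℝ) < 2 * v := by linarith
  rw [integral_sub_right_eq_self (μ := volume)
    (fun β : Fin q → ℝ => Real.exp (-(β ⬝ᵥ G.mulVec β) / (2*v))) m]
  have hM : ((2*v)⁻¹ • G).PosDef := posdef_smul' hG (by positivity)
  have heq : ∀ β : Fin q → ℝ,
      Real.exp (-(β ⬝ᵥ G.mulVec β) / (2*v)) =
        Real.exp (-(β ⬝ᵥ ((2*v)⁻¹ • G).mulVec β)) := by
    intro β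
    congr 1
    rw [smul_mulVec, dotProduct_smul, smul_eq_mul]
    field_simp
  simp_rw [heq]
  rw [gauss_int hM, det_smul]
  have : ((2*v)⁻¹ ^ (Fintype.card (Fin q)) * G.det) ^ (-(1:ℝ)/2)
      = (2*v) ^ ((q:ℝ)/2) * G.det ^ (-(1:ℝ)/2) := by
    rw [Fintype.card_fin, Real.mul_rpow (by positivity) hG.det_pos.le]
    congr 1
    rw [← Real.rpow_natCast ((2*v)⁻¹) q, ← Real.rpow_mul (by positivity),
      Real.inv_rpow h2v.le, ← Real.rpow_neg h2v.le]
    congr 1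
    ring
  rw [this, ← mul_assoc, ← Real.mul_rpow Real.pi_pos.le h2v.le]
  congr 2
  ring


end AuxLemmas

/-- Marginal likelihood of the universal kriging model: integrating the
Gaussian likelihood against a flat prior on `β` and an inverse-Gamma `(a,b)` prior on `σ²`
gives `(2π)^{−(n−q)/2} det(G K)^{−1/2} (b^a/Γ(a)) Γ(a+(n−q)/2) / (b+w)^{a+(n−q)/2}`,
where `w = (yᵀK⁻¹y − β̂ᵀGβ̂)/2`. -/
theorem marginal_likelihood_closed_form (n q : ℕ) (hnq : q < n)
    (K : Matrix (Fin n) (Fin n) ℝ) (hK : K.PosDef)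
    (P : Matrix (Fin n) (Fin q) ℝ) (hP : P.rank = q)
    (y : Fin n → ℝ) (a b : ℝ) (ha : 0 < a) (hb : 0 < b)
    (G : Matrix (Fin q) (Fin q) ℝ) (hG : G = Pᵀ * K⁻¹ * P)
    (βhat : Fin q → ℝ) (hβhat : βhat = (G⁻¹ * Pᵀ * K⁻¹).mulVec y)
    (w : ℝ) (hw : w = (y ⬝ᵥ K⁻¹.mulVec y - βhat ⬝ᵥ G.mulVec βhat) / 2) :
    (∫ v in Set.Ioi (0 : ℝ),
        ∫ β : Fin q → ℝ,
          (2 * Real.pi * v) ^ (-(n : ℝ) / 2) * K.det ^ (-(1 : ℝ) / 2) *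
              Real.exp (-((y - P.mulVec β) ⬝ᵥ K⁻¹.mulVec (y - P.mulVec β)) / (2 * v)) *
            (b ^ a / Real.Gamma a * v ^ (-a - 1) * Real.exp (-b / v))) =
      (2 * Real.pi) ^ (-((n : ℝ) - q) / 2) * (G.det * K.det) ^ (-(1 : ℝ) / 2) *
        (b ^ a / Real.Gamma a) * Real.Gamma (a + ((n : ℝ) - q) / 2) /
          (b + w) ^ (a + ((n : ℝ) - q) / 2) := by
  have hKi : K⁻¹.PosDef := hK.inv
  have hKisym : K⁻¹ᵀ = K⁻¹ := by
    have := hKi.1.eq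
    simpa using this
  -- injectivity of P
  have hPinj : ∀ x : Fin q → ℝ, x ≠ 0 → P.mulVec x ≠ 0 := by
    intro x hx hPx
    have hker : LinearMap.ker P.mulVecLin = ⊥ := by
      have h1 : Module.finrank ℝ (LinearMap.range P.mulVecLin) = q := hP
      have h2 := LinearMap.finrank_range_add_finrank_ker P.mulVecLin
      rw [h1] at h2
      simp only [Module.finrank_pi, Fintype.card_fin] at h2
      have : Module.finrank ℝ (LinearMap.ker P.mulVecLin) = 0 := by omega
      exact Submodule.finrank_eq_zero.mp this
    have : x ∈ LinearMap.ker P.mulVecLin := by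
      simpa [Matrix.mulVecLin] using hPx
    rw [hker] at this
    exact hx (by simpa using this)
  -- G is positive definite
  have hGpd : G.PosDef := by
    refine Matrix.PosDef.of_dotProduct_mulVec_pos ?_ ?_
    · have : Gᵀ = G := by
        rw [hG, transpose_mul, transpose_mul, transpose_transpose, hKisym, Matrix.mul_assoc]
      simpa [Matrix.IsSymm] using this
    · intro x hx
      have h1 : G.mulVec x = Pᵀ.mulVec (K⁻¹.mulVec (P.mulVec x)) := by
        rw [hG, mulVec_mulVec, mulVec_mulVec]
      have h2 : x ⬝ᵥ G.mulVec x = (P.mulVec x) ⬝ᵥ K⁻¹.mulVec (P.mulVec x) := by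
        rw [h1, dotProduct_mulVec, vecMul_transpose]
      simp only [star_trivial]
      rw [h2]
      simpa using hKi.dotProduct_mulVec_pos (hPinj x hx)
  have hGdet : G.det ≠ 0 := hGpd.det_pos.ne'
  have hGsym : Gᵀ = G := by simpa using hGpd.1.eq
  -- G βhat = Pᵀ K⁻¹ y
  have hGβ : G.mulVec βhat = (Pᵀ * K⁻¹).mulVec y := by
    rw [hβhat, mulVec_mulVec, ← Matrix.mul_assoc, ← Matrix.mul_assoc,
      Matrix.mul_nonsing_inv G hGdet.isUnit, Matrix.one_mul]
  -- symmetry helpers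
  have hsymK : ∀ u z : Fin n → ℝ, u ⬝ᵥ K⁻¹.mulVec z = z ⬝ᵥ K⁻¹.mulVec u := by
    intro u z
    calc u ⬝ᵥ K⁻¹.mulVec z = (K⁻¹.mulVec u) ⬝ᵥ z := by
          conv_lhs => rw [dotProduct_mulVec, ← hKisym, vecMul_transpose]
      _ = z ⬝ᵥ K⁻¹.mulVec u := dotProduct_comm _ _
  have hsymG : ∀ u z : Fin q → ℝ, u ⬝ᵥ G.mulVec z = z ⬝ᵥ G.mulVec u := by
    intro u z
    calc u ⬝ᵥ G.mulVec z = (G.mulVec u) ⬝ᵥ z := by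
          conv_lhs => rw [dotProduct_mulVec, ← hGsym, vecMul_transpose]
      _ = z ⬝ᵥ G.mulVec u := dotProduct_comm _ _
  -- the key quadratic identity
  have key : ∀ β : Fin q → ℝ,
      (y - P.mulVec β) ⬝ᵥ K⁻¹.mulVec (y - P.mulVec β)
        = (β - βhat) ⬝ᵥ G.mulVec (β - βhat) + 2 * w := by
    intro β
    have e1 : (P.mulVec β) ⬝ᵥ K⁻¹.mulVec y = β ⬝ᵥ G.mulVec βhat := by
      rw [hGβ, ← mulVec_mulVec, ← vecMul_transpose, ← dotProduct_mulVec]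
    have e2 : (P.mulVec β) ⬝ᵥ K⁻¹.mulVec (P.mulVec β) = β ⬝ᵥ G.mulVec β := by
      rw [hG, ← mulVec_mulVec, ← mulVec_mulVec, ← vecMul_transpose, ← dotProduct_mulVec]
    have e3 := hsymK y (P.mulVec β)
    have e4 := hsymG βhat β
    have hw' : 2 * w = y ⬝ᵥ K⁻¹.mulVec y - βhat ⬝ᵥ G.mulVec βhat := by rw [hw]; ring
    simp only [mulVec_sub, dotProduct_sub, sub_dotProduct]
    linarith [e1, e2, e3, e4, hw']
  -- nonnegativity of w
  have hwnn : 0 ≤ w := by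
    have hk := key βhat
    rw [sub_self, mulVec_zero, dotProduct_zero] at hk
    have h0 : 0 ≤ (y - P.mulVec βhat) ⬝ᵥ K⁻¹.mulVec (y - P.mulVec βhat) := by
      have := hKi.posSemidef.dotProduct_mulVec_nonneg (y - P.mulVec βhat)
      simpa using this
    linarith
  -- notation
  set s : ℝ := a + ((n:ℝ) - q)/2 with hs_def
  have hnq' : (0:ℝ) < (n:ℝ) - q := by
    have : (q:ℝ) < n := by exact_mod_cast hnq
    linarith
  have hspos : 0 < s := by rw [hs_def]; linarith
  have hbw : (0:ℝ) < b + w := by linarith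
  have hCd : (0:ℝ) < G.det * K.det := mul_pos hGpd.det_pos hK.det_pos
  -- rewrite the outer integrand
  have houter : ∀ v ∈ Set.Ioi (0:ℝ),
      (∫ β : Fin q → ℝ,
          (2 * Real.pi * v) ^ (-(n : ℝ) / 2) * K.det ^ (-(1 : ℝ) / 2) *
              Real.exp (-((y - P.mulVec β) ⬝ᵥ K⁻¹.mulVec (y - P.mulVec β)) / (2 * v)) *
            (b ^ a / Real.Gamma a * v ^ (-a - 1) * Real.exp (-b / v)))
        = ((2 * Real.pi) ^ (((q:ℝ) - n)/2) * K.det ^ (-(1:ℝ)/2) * G.det ^ (-(1:ℝ)/2) *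
            (b ^ a / Real.Gamma a)) * (v ^ (-s - 1) * Real.exp (-(b + w) / v)) := by
    intro v hv
    rw [Set.mem_Ioi] at hv
    have h2πv : (0:ℝ) < 2 * Real.pi * v := by positivity
    have hβint : (∫ β : Fin q → ℝ,
          (2 * Real.pi * v) ^ (-(n : ℝ) / 2) * K.det ^ (-(1 : ℝ) / 2) *
              Real.exp (-((y - P.mulVec β) ⬝ᵥ K⁻¹.mulVec (y - P.mulVec β)) / (2 * v)) *
            (b ^ a / Real.Gamma a * v ^ (-a - 1) * Real.exp (-b / v)))
        = ((2 * Real.pi * v) ^ (-(n : ℝ) / 2) * K.det ^ (-(1:ℝ)/2) * Real.exp (-(w/v)) *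
            (b ^ a / Real.Gamma a * v ^ (-a - 1) * Real.exp (-b / v))) *
          ((2 * Real.pi * v) ^ ((q:ℝ)/2) * G.det ^ (-(1:ℝ)/2)) := by
      rw [← gauss_scaled hGpd hv βhat, ← MeasureTheory.integral_const_mul]
      congr 1
      funext β
      rw [key β, show -((β - βhat) ⬝ᵥ G.mulVec (β - βhat) + 2 * w) / (2*v)
          = -((β - βhat) ⬝ᵥ G.mulVec (β - βhat)) / (2*v) + -(w/v) by field_simp; ring,
        Real.exp_add]
      ring
    rw [hβint]
    -- combine powers of v and exponentials
    have p1 : (2 * Real.pi * v) ^ (-(n : ℝ) / 2) * (2 * Real.pi * v) ^ ((q:ℝ)/2)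
        = (2 * Real.pi) ^ (((q:ℝ) - n)/2) * v ^ (((q:ℝ) - n)/2) := by
      rw [← Real.rpow_add h2πv, show -(n:ℝ)/2 + (q:ℝ)/2 = ((q:ℝ) - (n:ℝ))/2 by ring,
        Real.mul_rpow (by positivity) hv.le]
    have p2 : v ^ (((q:ℝ) - n)/2) * v ^ (-a - 1) = v ^ (-s - 1) := by
      rw [← Real.rpow_add hv]
      congr 1
      rw [hs_def]
      ring
    have p3 : Real.exp (-(w/v)) * Real.exp (-b/v) = Real.exp (-(b+w)/v) := by
      rw [← Real.exp_add]
      congr 1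
      field_simp
      ring
    calc (2 * Real.pi * v) ^ (-(n : ℝ) / 2) * K.det ^ (-(1:ℝ)/2) * Real.exp (-(w/v)) *
            (b ^ a / Real.Gamma a * v ^ (-a - 1) * Real.exp (-b / v)) *
          ((2 * Real.pi * v) ^ ((q:ℝ)/2) * G.det ^ (-(1:ℝ)/2))
        = ((2 * Real.pi * v) ^ (-(n : ℝ) / 2) * (2 * Real.pi * v) ^ ((q:ℝ)/2)) *
            K.det ^ (-(1:ℝ)/2) * G.det ^ (-(1:ℝ)/2) * (b ^ a / Real.Gamma a) *
            (v ^ (-a - 1) * (Real.exp (-(w/v)) * Real.exp (-b/v))) := by ring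
      _ = _ := by
        rw [p1, p3]
        rw [show (2 * Real.pi) ^ (((q:ℝ) - n)/2) * v ^ (((q:ℝ) - n)/2) *
            K.det ^ (-(1:ℝ)/2) * G.det ^ (-(1:ℝ)/2) * (b ^ a / Real.Gamma a) *
            (v ^ (-a - 1) * Real.exp (-(b+w)/v))
          = (2 * Real.pi) ^ (((q:ℝ) - n)/2) * K.det ^ (-(1:ℝ)/2) * G.det ^ (-(1:ℝ)/2) *
            (b ^ a / Real.Gamma a) *
            ((v ^ (((q:ℝ) - n)/2) * v ^ (-a - 1)) * Real.exp (-(b+w)/v)) by ring, p2]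
  rw [setIntegral_congr_fun measurableSet_Ioi houter, MeasureTheory.integral_const_mul,
    int_inv_gamma hspos hbw]
  -- final constant algebra
  have q1 : ((2 * Real.pi) : ℝ) ^ (((q:ℝ) - n)/2) = (2 * Real.pi) ^ (-((n:ℝ) - q)/2) := by
    congr 1
    ring
  have q2 : (G.det * K.det) ^ (-(1:ℝ)/2) = G.det ^ (-(1:ℝ)/2) * K.det ^ (-(1:ℝ)/2) := by
    rw [Real.mul_rpow hGpd.det_pos.le hK.det_pos.le]
  rw [q1, q2, hs_def]
  ring
end

section
/- Fix a real number w>0 and a real number m>0 (in the paper, m=(n−q)/2 with integers n>q). Define p(a,b) = (b^a/Γ(a)) · Γ(a+m) / (b+w)^{a+m} for a>0, b>0. Then the supremum of p over (a,b)∈(0,∞)² is not attained: for every (a,b)∈(0,∞)² there exists (a′,b′)∈(0,∞)² with p(a′,b′) > p(a,b). In particular the empirical Bayes maximization of the marginal likelihood over the hyperparameters (a,b) has no finite maximizer. -/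
open Real

lemma fDeriv (s : ℝ) (hs : 0 < s) :
    HasDerivAt (fun t : ℝ => (t+1) * (Real.log (t+1) - Real.log t))
      (Real.log (s+1) - Real.log s - 1/s) s := by
  have h1 : HasDerivAt (fun t : ℝ => Real.log (t+1)) (1/(s+1)) s := by
    simpa using ((hasDerivAt_id s).add_const 1).log (by positivity)
  have h2 : HasDerivAt (fun t : ℝ => Real.log t) (1/s) s := by
    simpa using (hasDerivAt_id s).log hs.ne'
  have h3 : HasDerivAt (fun t : ℝ => t + 1) 1 s := (hasDerivAt_id s).add_const 1
  have : HasDerivAt (fun t : ℝ => (t+1) * (Real.log (t+1) - Real.log t))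
      (1 * (Real.log (s+1) - Real.log s) + (s+1) * (1/(s+1) - 1/s)) s := h3.mul (h1.sub h2)
  convert this using 1
  have : s + 1 ≠ 0 := by positivity
  field_simp
  ring

lemma fAnti : StrictAntiOn (fun t : ℝ => (t+1) * (Real.log (t+1) - Real.log t)) (Set.Ioi 0) := by
  apply strictAntiOn_of_deriv_neg (convex_Ioi 0)
  · exact fun x hx => ((fDeriv x hx).continuousAt).continuousWithinAt
  · intro x hx
    rw [interior_Ioi] at hx
    have hx : (0:ℝ) < x := hx
    rw [(fDeriv x hx).deriv]
    have h1 : Real.log (x+1) - Real.log x = Real.log ((x+1)/x) :=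
      (Real.log_div (by positivity) hx.ne').symm
    have hne : (x+1)/x ≠ 1 := by
      intro h
      have := (div_eq_one_iff_eq hx.ne').1 h
      linarith
    have h2 : Real.log ((x+1)/x) < (x+1)/x - 1 :=
      Real.log_lt_sub_one_of_pos (by positivity) hne
    have h3 : (x+1)/x - 1 = 1/x := by field_simp; ring
    rw [h1]; rw [h3] at h2; linarith

lemma key (a m : ℝ) (ha : 0 < a) (hm : 0 < m) :
    (a+m+1) * (Real.log (a+m+1) - Real.log (a+m)) < (a+1) * (Real.log (a+1) - Real.log a) := by
  have := fAnti (Set.mem_Ioi.2 ha) (Set.mem_Ioi.2 (by linarith : (0:ℝ) < a + m)) (by linarith)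
  simpa using this

lemma gDeriv (a m w : ℝ) (x : ℝ) (hx : 0 < x) (hw : 0 < w) :
    HasDerivAt (fun t : ℝ => a * Real.log t - (a+m) * Real.log (t+w))
      (a / x - (a+m) / (x+w)) x := by
  have h1 : HasDerivAt (fun t : ℝ => Real.log t) (1/x) x := by
    simpa using (hasDerivAt_id x).log hx.ne'
  have h2 : HasDerivAt (fun t : ℝ => Real.log (t+w)) (1/(x+w)) x := by
    simpa using ((hasDerivAt_id x).add_const w).log (by positivity)
  have : HasDerivAt (fun t : ℝ => a * Real.log t - (a+m) * Real.log (t+w))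
      (a * (1/x) - (a+m) * (1/(x+w))) x := (h1.const_mul a).sub (h2.const_mul (a+m))
  convert this using 1
  ring

lemma gmax (a m w : ℝ) (ha : 0 < a) (hm : 0 < m) (hw : 0 < w)
    {b : ℝ} (hb : 0 < b) (hne : b ≠ a*w/m) :
    a * Real.log b - (a+m) * Real.log (b+w)
      < a * Real.log (a*w/m) - (a+m) * Real.log (a*w/m + w) := by
  set b0 : ℝ := a*w/m with hb0
  have hb0pos : 0 < b0 := by positivity
  set g : ℝ → ℝ := fun t => a * Real.log t - (a+m) * Real.log (t+w) with hg
  have hcont : ∀ x : ℝ, 0 < x → ContinuousAt g x :=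
    fun x hx => (gDeriv a m w x hx hw).continuousAt
  rcases lt_or_gt_of_ne hne with h | h
  · -- b < b0, g strictly mono on Icc b b0
    have hmono : StrictMonoOn g (Set.Icc b b0) := by
      apply strictMonoOn_of_deriv_pos (convex_Icc b b0)
      · exact fun x hx => (hcont x (lt_of_lt_of_le hb hx.1)).continuousWithinAt
      · intro x hx
        rw [interior_Icc] at hx
        have hxpos : 0 < x := hb.trans hx.1
        rw [(gDeriv a m w x hxpos hw).deriv]
        have hxlt : m * x < a * w := by
          have := hx.2
          rw [hb0] at this
          calc m * x < m * (a*w/m) := by nlinarith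
            _ = a * w := by field_simp
        rw [div_sub_div _ _ hxpos.ne' (by positivity : (x+w) ≠ 0)]
        apply div_pos _ (by positivity)
        nlinarith
    exact hmono (Set.left_mem_Icc.2 h.le) (Set.right_mem_Icc.2 h.le) h
  · -- b0 < b, g strictly anti on Icc b0 b
    have hanti : StrictAntiOn g (Set.Icc b0 b) := by
      apply strictAntiOn_of_deriv_neg (convex_Icc b0 b)
      · exact fun x hx => (hcont x (lt_of_lt_of_le hb0pos hx.1)).continuousWithinAt
      · intro x hx
        rw [interior_Icc] at hx
        have hxpos : 0 < x := hb0pos.trans hx.1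
        rw [(gDeriv a m w x hxpos hw).deriv]
        have hxgt : a * w < m * x := by
          have := hx.1
          rw [hb0] at this
          calc a * w = m * (a*w/m) := by field_simp
            _ < m * x := by nlinarith
        rw [div_sub_div _ _ hxpos.ne' (by positivity : (x+w) ≠ 0)]
        apply div_neg_of_neg_of_pos _ (by positivity)
        nlinarith
    exact hanti (Set.left_mem_Icc.2 h.le) (Set.right_mem_Icc.2 h.le) h

lemma pval (a m b w : ℝ) (ha : 0 < a) (hm : 0 < m) (hb : 0 < b) (hw : 0 < w) :
    b ^ a / Real.Gamma a * Real.Gamma (a + m) / (b + w) ^ (a + m)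
      = Real.exp (Real.log (Real.Gamma (a+m)) - Real.log (Real.Gamma a)
          + (a * Real.log b - (a+m) * Real.log (b+w))) := by
  have hGa : 0 < Real.Gamma a := Real.Gamma_pos_of_pos ha
  have hGam : 0 < Real.Gamma (a+m) := Real.Gamma_pos_of_pos (by linarith)
  rw [Real.rpow_def_of_pos hb, Real.rpow_def_of_pos (by positivity : (0:ℝ) < b + w)]
  nth_rewrite 1 [← Real.exp_log hGa]
  nth_rewrite 1 [← Real.exp_log hGam]
  rw [← Real.exp_sub, ← Real.exp_add, ← Real.exp_sub]
  congr 1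
  ring

/-- For fixed `w > 0` and `m > 0`, the (rescaled) marginal likelihood
`p(a,b) = (b^a/Γ(a)) Γ(a+m) / (b+w)^{a+m}` has no finite maximizer over `(0,∞)²`:
for every `(a,b)` there is `(a',b')` with a strictly larger value. -/
theorem empirical_bayes_unbounded (w m : ℝ) (hw : 0 < w) (hm : 0 < m)
    (p : ℝ → ℝ → ℝ)
    (hp : ∀ a b : ℝ, p a b =
      b ^ a / Real.Gamma a * Real.Gamma (a + m) / (b + w) ^ (a + m)) :
    ∀ a b : ℝ, 0 < a → 0 < b →
      ∃ a' b' : ℝ, 0 < a' ∧ 0 < b' ∧ p a b < p a' b' := by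
  intro a b ha hb
  by_cases hbe : b = a*w/m
  · -- at the optimal b: increase a to a+1
    refine ⟨a+1, (a+1)*w/m, by linarith, by positivity, ?_⟩
    have hb1 : (0:ℝ) < (a+1)*w/m := by positivity
    rw [hp, hp, pval a m b w ha hm hb hw, pval (a+1) m _ w (by linarith) hm hb1 hw]
    rw [Real.exp_lt_exp]
    subst hbe
    -- rewrite all logs
    have hGa : Real.Gamma a ≠ 0 := (Real.Gamma_pos_of_pos ha).ne'
    have hGam : Real.Gamma (a+m) ≠ 0 := (Real.Gamma_pos_of_pos (by linarith)).ne'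
    have e1 : Real.log (Real.Gamma (a+1)) = Real.log a + Real.log (Real.Gamma a) := by
      rw [Real.Gamma_add_one ha.ne', Real.log_mul ha.ne' hGa]
    have e2 : Real.log (Real.Gamma (a+1+m)) = Real.log (a+m) + Real.log (Real.Gamma (a+m)) := by
      have : a+1+m = (a+m)+1 := by ring
      rw [this, Real.Gamma_add_one (by positivity : a+m ≠ 0),
        Real.log_mul (by positivity : a+m ≠ 0) hGam]
    have logdiv : ∀ x : ℝ, 0 < x → Real.log (x*w/m) = Real.log x + Real.log w - Real.log m := by
      intro x hx
      rw [Real.log_div (by positivity) hm.ne', Real.log_mul hx.ne' hw.ne']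
    have e3 : Real.log (a*w/m) = Real.log a + Real.log w - Real.log m := logdiv a ha
    have e4 : Real.log (a*w/m + w) = Real.log (a+m) + Real.log w - Real.log m := by
      have : a*w/m + w = (a+m)*w/m := by field_simp
      rw [this, logdiv (a+m) (by linarith)]
    have e5 : Real.log ((a+1)*w/m) = Real.log (a+1) + Real.log w - Real.log m :=
      logdiv (a+1) (by linarith)
    have e6 : Real.log ((a+1)*w/m + w) = Real.log (a+1+m) + Real.log w - Real.log m := by
      have : (a+1)*w/m + w = (a+1+m)*w/m := by field_simp
      rw [this, logdiv (a+1+m) (by linarith)]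
    rw [e1, e2, e3, e4, e5, e6]
    have hkey := key a m ha hm
    have hmm : a+1+m = a+m+1 := by ring
    rw [hmm]
    nlinarith [hkey]
  · -- move b to the optimum a*w/m
    refine ⟨a, a*w/m, ha, by positivity, ?_⟩
    rw [hp, hp, pval a m b w ha hm hb hw, pval a m _ w ha hm (by positivity) hw]
    rw [Real.exp_lt_exp]
    have := gmax a m w ha hm hw hb hbe
    linarith
end

section
/- Fix a real number w>0 and let m = k/2 for an integer k ≥ 1. Define the profiled marginal likelihood ρ(a) = ((aw/m)^a/Γ(a)) · Γ(a+m) / (aw/m + w)^{a+m} for a>0. Then ρ is monotonically nondecreasing on (0,∞). -/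
noncomputable section

open Filter Set MeasureTheory Real
open scoped ENNReal

namespace ProfiledAux

/-- The scaled Gamma integral `∫ e^{-ux} x^{u-1} dx = Γ(u)/u^u`. -/
def F (u : ℝ) : ℝ := ∫ x in Ioi (0 : ℝ), Real.exp (-u * x) * x ^ (u - 1)

lemma F_convergent {u : ℝ} (hu : 0 < u) :
    IntegrableOn (fun x : ℝ => Real.exp (-u * x) * x ^ (u - 1)) (Ioi 0) := by
  have h0 : IntegrableOn (fun x : ℝ => Real.exp (-x) * x ^ (u - 1)) (Ioi 0) :=
    Real.GammaIntegral_convergent hu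
  have h1 : IntegrableOn (fun x : ℝ => Real.exp (-(u * x)) * (u * x) ^ (u - 1)) (Ioi 0) := by
    have := (integrableOn_Ioi_comp_mul_left_iff
      (fun t : ℝ => Real.exp (-t) * t ^ (u - 1)) 0 hu).mpr (by simpa using h0)
    simpa using this
  have h2 := h1.smul (u ^ ((1 : ℝ) - u))
  refine (integrableOn_congr_fun (fun x hx => ?_) measurableSet_Ioi).mpr h2
  have hx : (0 : ℝ) < x := hx
  simp only [Pi.smul_apply, smul_eq_mul]
  rw [Real.mul_rpow hu.le hx.le, neg_mul]
  rw [show u ^ ((1:ℝ) - u) * (Real.exp (-(u * x)) * (u ^ (u - 1) * x ^ (u - 1)))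
      = (u ^ ((1:ℝ) - u) * u ^ (u - 1)) * (Real.exp (-(u * x)) * x ^ (u - 1)) by ring,
    ← Real.rpow_add hu]
  norm_num

lemma F_eq {u : ℝ} (hu : 0 < u) : F u = Real.Gamma u / u ^ u := by
  have key := integral_comp_mul_left_Ioi (fun t : ℝ => Real.exp (-t) * t ^ (u - 1)) 0 hu
  rw [mul_zero, ← Real.Gamma_eq_integral hu] at key
  have hcongr : (∫ x in Ioi (0:ℝ), Real.exp (-(u * x)) * (u * x) ^ (u - 1))
      = ∫ x in Ioi (0:ℝ), u ^ (u - 1) * (Real.exp (-u * x) * x ^ (u - 1)) := by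
    refine setIntegral_congr_fun measurableSet_Ioi fun x hx => ?_
    have hx : (0 : ℝ) < x := hx
    rw [Real.mul_rpow hu.le hx.le, neg_mul]; ring
  rw [hcongr, MeasureTheory.integral_const_mul, smul_eq_mul] at key
  have hpow : u ^ u = u * u ^ (u - 1) := by
    have h := Real.rpow_add hu 1 (u - 1)
    rw [show (1 : ℝ) + (u - 1) = u by ring, Real.rpow_one] at h
    exact h
  have h1 : u ^ (u - 1) ≠ 0 := (Real.rpow_pos_of_pos hu _).ne'
  rw [F]
  field_simp [hpow] at key ⊢
  rw [hpow]
  linarith [key]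

lemma F_pos {u : ℝ} (hu : 0 < u) : 0 < F u := by
  rw [F_eq hu]
  exact div_pos (Real.Gamma_pos_of_pos hu) (Real.rpow_pos_of_pos hu _)

/-- Hölder's inequality for `F`, mimicking
`Real.Gamma_mul_add_mul_le_rpow_Gamma_mul_rpow_Gamma`. -/
theorem F_mul_add_mul_le {s t a b : ℝ} (hs : 0 < s) (ht : 0 < t)
    (ha : 0 < a) (hb : 0 < b) (hab : a + b = 1) :
    F (a * s + b * t) ≤ F s ^ a * F t ^ b := by
  let f : ℝ → ℝ → ℝ → ℝ := fun c u x => Real.exp (-(c * u) * x) * x ^ (c * (u - 1))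
  have e : Real.HolderConjugate (1 / a) (1 / b) := Real.holderConjugate_one_div ha hb hab
  have hab' : b = 1 - a := by linarith
  have hst : 0 < a * s + b * t := by positivity
  have posf : ∀ c u x : ℝ, x ∈ Ioi (0 : ℝ) → 0 ≤ f c u x := fun c u x hx =>
    mul_nonneg (Real.exp_pos _).le (Real.rpow_pos_of_pos hx _).le
  have posf' : ∀ c u : ℝ, ∀ᵐ x : ℝ ∂volume.restrict (Ioi 0), 0 ≤ f c u x := fun c u =>
    (ae_restrict_iff' measurableSet_Ioi).mpr (ae_of_all _ (posf c u))
  have fpow : ∀ {c x : ℝ} (_ : 0 < c) (u : ℝ) (_ : 0 < x),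
      Real.exp (-u * x) * x ^ (u - 1) = f c u x ^ (1 / c) := by
    intro c x hc u hx
    dsimp only [f]
    rw [Real.mul_rpow (Real.exp_pos _).le ((Real.rpow_nonneg hx.le) _), ← Real.exp_mul,
      ← Real.rpow_mul hx.le]
    congr 2 <;> field_simp [hc.ne'] <;> ring
  have f_mem_Lp : ∀ {c u : ℝ} (hc : 0 < c) (hu : 0 < u),
      MemLp (f c u) (ENNReal.ofReal (1 / c)) (volume.restrict (Ioi 0)) := by
    intro c u hc hu
    have A : ENNReal.ofReal (1 / c) ≠ 0 := by
      rwa [Ne, ENNReal.ofReal_eq_zero, not_le, one_div_pos]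
    have B : ENNReal.ofReal (1 / c) ≠ ∞ := ENNReal.ofReal_ne_top
    rw [← memLp_norm_rpow_iff _ A B, ENNReal.toReal_ofReal (one_div_nonneg.mpr hc.le),
      ENNReal.div_self A B, memLp_one_iff_integrable]
    · apply Integrable.congr (F_convergent hu)
      refine eventuallyEq_of_mem (self_mem_ae_restrict measurableSet_Ioi) fun x hx => ?_
      rw [fpow hc u hx]
      congr 1
      exact (norm_of_nonneg (posf _ _ x hx)).symm
    · refine ContinuousOn.aestronglyMeasurable ?_ measurableSet_Ioi
      refine (Continuous.continuousOn ?_).mul (continuousOn_of_forall_continuousAt fun x hx => ?_)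
      · exact continuous_exp.comp (continuous_const.mul continuous_id')
      · exact Real.continuousAt_rpow_const _ _ (Or.inl (mem_Ioi.mp hx).ne')
  show (∫ x in Ioi (0:ℝ), Real.exp (-(a * s + b * t) * x) * x ^ (a * s + b * t - 1))
      ≤ (∫ x in Ioi (0:ℝ), Real.exp (-s * x) * x ^ (s - 1)) ^ a *
        (∫ x in Ioi (0:ℝ), Real.exp (-t * x) * x ^ (t - 1)) ^ b
  convert MeasureTheory.integral_mul_le_Lp_mul_Lq_of_nonneg e (posf' a s) (posf' b t)
    (f_mem_Lp ha hs) (f_mem_Lp hb ht) using 1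
  · refine setIntegral_congr_fun measurableSet_Ioi fun x hx => ?_
    dsimp only [f]
    have A : Real.exp (-(a * s + b * t) * x)
        = Real.exp (-(a * s) * x) * Real.exp (-(b * t) * x) := by
      rw [← Real.exp_add]; congr 1; ring
    have B : x ^ (a * s + b * t - 1) = x ^ (a * (s - 1)) * x ^ (b * (t - 1)) := by
      rw [← Real.rpow_add hx]; congr 1; linarith
    rw [A, B]
    ring
  · rw [one_div_one_div, one_div_one_div]
    congr 2
    · exact setIntegral_congr_fun measurableSet_Ioi fun x hx => fpow ha _ hx
    · exact setIntegral_congr_fun measurableSet_Ioi fun x hx => fpow hb _ hx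

/-- The auxiliary function `h x = log Γ x - x log x`. -/
def hfun (x : ℝ) : ℝ := Real.log (Real.Gamma x) - x * Real.log x

/-- `h x = log Γ x - x log x` is convex on `(0,∞)`. -/
theorem convexOn_h : ConvexOn ℝ (Ioi 0) hfun := by
  unfold hfun
  have hF : ∀ x ∈ Ioi (0:ℝ), Real.log (Real.Gamma x) - x * Real.log x = Real.log (F x) := by
    intro x hx
    have hx : (0:ℝ) < x := hx
    rw [F_eq hx, Real.log_div (Real.Gamma_pos_of_pos hx).ne' (Real.rpow_pos_of_pos hx _).ne',
      Real.log_rpow hx]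
  refine ConvexOn.congr ?_ (fun x hx => (hF x hx).symm)
  refine convexOn_iff_forall_pos.mpr ⟨convex_Ioi _, fun x hx y hy a b ha hb hab => ?_⟩
  simp only [mem_Ioi] at hx hy
  simp only [smul_eq_mul]
  rw [← Real.log_rpow (F_pos hx), ← Real.log_rpow (F_pos hy), ← Real.log_mul
    (Real.rpow_pos_of_pos (F_pos hx) _).ne' (Real.rpow_pos_of_pos (F_pos hy) _).ne']
  exact Real.log_le_log (F_pos (by positivity)) (F_mul_add_mul_le hx hy ha hb hab)

end ProfiledAux

/-- For `w > 0` and `m = k/2` with `k ≥ 1` an integer, the profiled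
marginal likelihood `ρ(a) = ((aw/m)^a/Γ(a)) Γ(a+m) / (aw/m + w)^{a+m}` is
monotonically nondecreasing on `(0,∞)`. -/
theorem profiled_marginal_likelihood_monotone (w : ℝ) (hw : 0 < w)
    (k : ℕ) (hk : 1 ≤ k) (m : ℝ) (hm : m = (k : ℝ) / 2)
    (ρ : ℝ → ℝ)
    (hρ : ∀ a : ℝ, ρ a =
      (a * w / m) ^ a / Real.Gamma a * Real.Gamma (a + m) / (a * w / m + w) ^ (a + m)) :
    MonotoneOn ρ (Set.Ioi (0 : ℝ)) := by
  have hk1 : (1 : ℝ) ≤ (k : ℝ) := by exact_mod_cast hk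
  have hm0 : 0 < m := by rw [hm]; linarith
  have hc : 0 < w / m := div_pos hw hm0
  -- representation of ρ via hfun
  have hrep : ∀ a : ℝ, 0 < a →
      ρ a = (w / m) ^ (-m) * Real.exp (ProfiledAux.hfun (a + m) - ProfiledAux.hfun a) := by
    intro a ha
    have ham : 0 < a + m := by linarith
    have hΓa := Real.Gamma_pos_of_pos ha
    have hΓam := Real.Gamma_pos_of_pos ham
    have e1 : a * w / m = a * (w / m) := by ring
    have e2 : a * w / m + w = (a + m) * (w / m) := by field_simp
    have hexp : Real.exp (ProfiledAux.hfun (a + m) - ProfiledAux.hfun a)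
        = Real.Gamma (a + m) * a ^ a / (Real.Gamma a * (a + m) ^ (a + m)) := by
      have hpos : 0 < Real.Gamma (a + m) * a ^ a / (Real.Gamma a * (a + m) ^ (a + m)) :=
        div_pos (mul_pos hΓam (Real.rpow_pos_of_pos ha _))
          (mul_pos hΓa (Real.rpow_pos_of_pos ham _))
      rw [← Real.exp_log hpos]
      congr 1
      rw [Real.log_div (mul_pos hΓam (Real.rpow_pos_of_pos ha _)).ne'
          (mul_pos hΓa (Real.rpow_pos_of_pos ham _)).ne',
        Real.log_mul hΓam.ne' (Real.rpow_pos_of_pos ha _).ne',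
        Real.log_mul hΓa.ne' (Real.rpow_pos_of_pos ham _).ne',
        Real.log_rpow ha, Real.log_rpow ham]
      unfold ProfiledAux.hfun
      ring
    rw [hρ a, hexp, e2, e1]
    rw [Real.mul_rpow ha.le hc.le, Real.mul_rpow ham.le hc.le]
    have e3 : (w / m) ^ a = (w / m) ^ (a + m) * (w / m) ^ (-m) := by
      rw [← Real.rpow_add hc]; ring_nf
    rw [e3]
    have h1 : (w / m) ^ (a + m) ≠ 0 := (Real.rpow_pos_of_pos hc _).ne'
    have h2 : (a + m) ^ (a + m) ≠ 0 := (Real.rpow_pos_of_pos ham _).ne'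
    field_simp
  intro a₁ h₁ a₂ h₂ h12
  have ha₁ : (0 : ℝ) < a₁ := h₁
  have ha₂ : (0 : ℝ) < a₂ := h₂
  rcases h12.eq_or_lt with rfl | hlt
  · exact le_rfl
  have key : ProfiledAux.hfun (a₁ + m) + ProfiledAux.hfun a₂
      ≤ ProfiledAux.hfun a₁ + ProfiledAux.hfun (a₂ + m) := by
    have hconv := ProfiledAux.convexOn_h
    have hL0 : 0 < a₂ + m - a₁ := by linarith
    set L := a₂ + m - a₁ with hL
    have hlam1 : (0 : ℝ) ≤ m / L := by positivity
    have hlam2 : (0 : ℝ) ≤ (a₂ - a₁) / L := by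
      apply div_nonneg _ hL0.le; linarith
    have hsum : m / L + (a₂ - a₁) / L = 1 := by
      field_simp [hL]
      ring
    have hmem2 : a₂ + m ∈ Ioi (0 : ℝ) := mem_Ioi.mpr (by linarith)
    have c1 := hconv.2 (mem_Ioi.mpr ha₁) hmem2 hlam1 hlam2 hsum
    have c2 := hconv.2 (mem_Ioi.mpr ha₁) hmem2 hlam2 hlam1 (by linarith)
    rw [smul_eq_mul, smul_eq_mul, smul_eq_mul, smul_eq_mul,
      show m / L * a₁ + (a₂ - a₁) / L * (a₂ + m) = a₂ by field_simp [hL]; ring] at c1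
    rw [smul_eq_mul, smul_eq_mul, smul_eq_mul, smul_eq_mul,
      show (a₂ - a₁) / L * a₁ + m / L * (a₂ + m) = a₁ + m by field_simp [hL]; ring] at c2
    have s1 : m / L * ProfiledAux.hfun a₁ + (a₂ - a₁) / L * ProfiledAux.hfun a₁
        = ProfiledAux.hfun a₁ := by rw [← add_mul, hsum, one_mul]
    have s2 : m / L * ProfiledAux.hfun (a₂ + m) + (a₂ - a₁) / L * ProfiledAux.hfun (a₂ + m)
        = ProfiledAux.hfun (a₂ + m) := by rw [← add_mul, hsum, one_mul]
    linarith
  rw [hrep a₁ ha₁, hrep a₂ ha₂]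
  have hee : Real.exp (ProfiledAux.hfun (a₁ + m) - ProfiledAux.hfun a₁)
      ≤ Real.exp (ProfiledAux.hfun (a₂ + m) - ProfiledAux.hfun a₂) :=
    Real.exp_le_exp.mpr (by linarith)
  exact mul_le_mul_of_nonneg_left hee (Real.rpow_pos_of_pos hc _).le
end
end

section
/- Fix a real number w>0, m = k/2 for an integer k ≥ 1, and hyperprior parameters ζ>0, ι>0. Define the MMAP objective p̃(a,b) = (b^a/Γ(a)) · Γ(a+m)/(b+w)^{a+m} · a^{ζ−1} e^{−ι a} for (a,b)∈(0,∞)². Then the supremum of p̃ over (0,∞)² is finite and is attained at some point (a*,b*) with 0 < a* < ∞ and 0 < b* < ∞. -/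
open Real Set Filter Topology

private lemma my_gammaCAt {s : ℝ} (hs : 0 < s) : ContinuousAt Real.Gamma s := by
  refine (Real.differentiableAt_Gamma fun n => ?_).continuousAt
  have : (0:ℝ) ≤ n := Nat.cast_nonneg n
  intro hcon; rw [hcon] at hs; linarith

private lemma my_gamma_add_nat_le (a : ℝ) (ha : 0 < a) (k : ℕ) :
    Real.Gamma (a + k) ≤ Real.Gamma a * (a + k) ^ k := by
  induction k with
  | zero => simp
  | succ n ih =>
    have hak : (0:ℝ) < a + n := by positivity
    have h1 : Real.Gamma (a + (n+1 : ℕ)) = (a + n) * Real.Gamma (a + n) := by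
      push_cast
      rw [show a + ((n:ℝ)+1) = (a + n) + 1 by ring, Real.Gamma_add_one hak.ne']
    rw [h1]
    calc (a + n) * Real.Gamma (a + n) ≤ (a + n) * (Real.Gamma a * (a + n) ^ n) := by
          exact mul_le_mul_of_nonneg_left ih hak.le
      _ = Real.Gamma a * (a + n) ^ (n+1) := by ring
      _ ≤ Real.Gamma a * (a + (n+1:ℕ)) ^ (n+1) := by
          apply mul_le_mul_of_nonneg_left _ (Real.Gamma_pos_of_pos ha).le
          apply pow_le_pow_left₀ hak.le
          push_cast; linarith

private lemma my_gamma_midpoint (x y : ℝ) (hx : 0 < x) (hy : 0 < y) :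
    Real.Gamma ((x + y) / 2) ^ 2 ≤ Real.Gamma x * Real.Gamma y := by
  have h := Real.convexOn_log_Gamma.2 (mem_Ioi.mpr hx) (mem_Ioi.mpr hy)
    (by norm_num : (0:ℝ) ≤ 1/2) (by norm_num : (0:ℝ) ≤ 1/2) (by norm_num)
  simp only [smul_eq_mul, Function.comp_apply] at h
  have hmid : (1:ℝ)/2 * x + 1/2 * y = (x + y)/2 := by ring
  rw [hmid] at h
  have hmp : 0 < (x + y)/2 := by linarith
  have h2 : Real.log (Real.Gamma ((x+y)/2) ^ 2) ≤ Real.log (Real.Gamma x * Real.Gamma y) := by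
    rw [Real.log_pow, Real.log_mul (Real.Gamma_pos_of_pos hx).ne' (Real.Gamma_pos_of_pos hy).ne']
    push_cast
    linarith
  have hp1 : 0 < Real.Gamma ((x+y)/2) ^ 2 := by positivity
  have hp2 : 0 < Real.Gamma x * Real.Gamma y :=
    mul_pos (Real.Gamma_pos_of_pos hx) (Real.Gamma_pos_of_pos hy)
  exact (Real.log_le_log_iff hp1 hp2).mp h2

private lemma my_gamma_ratio_le (k : ℕ) (a : ℝ) (ha : 0 < a) :
    Real.Gamma (a + (k:ℝ)/2) ≤ Real.Gamma a * (a + k) ^ ((k:ℝ)/2) := by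
  have hak : (0:ℝ) < a + k := by positivity
  have h1 : Real.Gamma (a + (k:ℝ)/2) ^ 2 ≤ Real.Gamma a * Real.Gamma (a + k) := by
    have := my_gamma_midpoint a (a + k) ha (by positivity)
    rwa [show (a + (a + (k:ℝ)))/2 = a + (k:ℝ)/2 by ring] at this
  have h2 : Real.Gamma a * Real.Gamma (a + k) ≤ (Real.Gamma a * (a + k) ^ ((k:ℝ)/2)) ^ 2 := by
    have h3 : ((a + (k:ℝ)) ^ ((k:ℝ)/2)) ^ 2 = (a + k) ^ k := by
      rw [← Real.rpow_natCast ((a + (k:ℝ)) ^ ((k:ℝ)/2)) 2, ← Real.rpow_natCast (a + (k:ℝ)) k,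
        ← Real.rpow_mul hak.le]
      norm_num
    calc Real.Gamma a * Real.Gamma (a + k) ≤ Real.Gamma a * (Real.Gamma a * (a + k) ^ k) :=
          mul_le_mul_of_nonneg_left (my_gamma_add_nat_le a ha k) (Real.Gamma_pos_of_pos ha).le
      _ = (Real.Gamma a) ^ 2 * (a + k) ^ k := by ring
      _ = (Real.Gamma a * (a + k) ^ ((k:ℝ)/2)) ^ 2 := by rw [mul_pow, h3]
  have hle : Real.Gamma (a + (k:ℝ)/2) ^ 2 ≤ (Real.Gamma a * (a + k) ^ ((k:ℝ)/2)) ^ 2 :=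
    h1.trans h2
  have hg1 : 0 ≤ Real.Gamma (a + (k:ℝ)/2) := (Real.Gamma_pos_of_pos (by positivity)).le
  have hg2 : 0 ≤ Real.Gamma a * (a + k) ^ ((k:ℝ)/2) := by
    have := (Real.Gamma_pos_of_pos ha).le
    positivity
  calc Real.Gamma (a + (k:ℝ)/2) = Real.sqrt (Real.Gamma (a + (k:ℝ)/2) ^ 2) :=
        (Real.sqrt_sq hg1).symm
    _ ≤ Real.sqrt ((Real.Gamma a * (a + k) ^ ((k:ℝ)/2)) ^ 2) := Real.sqrt_le_sqrt hle
    _ = Real.Gamma a * (a + k) ^ ((k:ℝ)/2) := Real.sqrt_sq hg2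

private lemma my_rpow_tendsto_zero {p : ℝ} (hp : 0 < p) :
    Tendsto (fun x : ℝ => x ^ p) (𝓝[>] (0:ℝ)) (𝓝 0) := by
  have h0 : Tendsto (fun a : ℝ => a ^ p) (𝓝 (0:ℝ)) (𝓝 ((0:ℝ) ^ p)) :=
    (Real.continuousAt_rpow_const 0 p (Or.inr hp.le)).tendsto
  rw [Real.zero_rpow hp.ne'] at h0
  exact h0.mono_left nhdsWithin_le_nhds

private lemma my_h_contOn (m ζ ι : ℝ) (hm : 0 < m) :
    ContinuousOn (fun a : ℝ => Real.Gamma (a+m)/Real.Gamma a * a^(ζ-1) * Real.exp (-ι*a))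
      (Ioi 0) := by
  intro a ha
  have ha' : 0 < a := ha
  apply ContinuousAt.continuousWithinAt
  have c2 : ContinuousAt (fun a : ℝ => Real.Gamma (a+m)) a :=
    (my_gammaCAt (by positivity)).comp ((continuous_id.add continuous_const).continuousAt)
  have c3 : ContinuousAt Real.Gamma a := my_gammaCAt ha'
  have c5 : ContinuousAt (fun a : ℝ => a ^ (ζ-1)) a :=
    Real.continuousAt_rpow_const a (ζ-1) (Or.inl ha'.ne')
  have c6 : ContinuousAt (fun a : ℝ => Real.exp (-ι*a)) a :=
    (Real.continuous_exp.comp (continuous_const.mul continuous_id)).continuousAt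
  exact ((c2.div c3 (Real.Gamma_pos_of_pos ha').ne').mul c5).mul c6

private lemma my_h_tendsto_zero (m ζ ι : ℝ) (hm : 0 < m) (hζ : 0 < ζ) :
    Tendsto (fun a : ℝ => Real.Gamma (a+m)/Real.Gamma a * a^(ζ-1) * Real.exp (-ι*a))
      (𝓝[>] (0:ℝ)) (𝓝 0) := by
  have heq : ∀ a ∈ Ioi (0:ℝ),
      Real.Gamma (a+m)/Real.Gamma a * a^(ζ-1) * Real.exp (-ι*a)
        = a^ζ * (Real.Gamma (a+m)/Real.Gamma (a+1)) * Real.exp (-ι*a) := by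
    intro a ha
    have ha' : 0 < a := ha
    have hg : Real.Gamma (a+1) = a * Real.Gamma a := Real.Gamma_add_one ha'.ne'
    have hz : a^(ζ-1) * a = a^ζ := by
      rw [show ζ = (ζ-1)+1 by ring, Real.rpow_add_one ha'.ne']
      ring_nf
    have hGa : Real.Gamma a ≠ 0 := (Real.Gamma_pos_of_pos ha').ne'
    rw [hg]
    field_simp
    linear_combination hz
  have t1 : Tendsto (fun a : ℝ => a^ζ) (𝓝[>] (0:ℝ)) (𝓝 0) := my_rpow_tendsto_zero hζ
  have t2 : Tendsto (fun a : ℝ => Real.Gamma (a+m)/Real.Gamma (a+1)) (𝓝[>] (0:ℝ))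
      (𝓝 (Real.Gamma m / Real.Gamma 1)) := by
    apply Tendsto.mono_left _ nhdsWithin_le_nhds
    have c2 : ContinuousAt (fun a : ℝ => Real.Gamma (a+m)) 0 :=
      (my_gammaCAt (by simpa using hm)).comp ((continuous_id.add continuous_const).continuousAt)
    have c3 : ContinuousAt (fun a : ℝ => Real.Gamma (a+1)) 0 :=
      (my_gammaCAt (by norm_num)).comp ((continuous_id.add continuous_const).continuousAt)
    have := (c2.div c3 (by simp [Real.Gamma_one])).tendsto
    simpa [Pi.div_def] using this
  have t3 : Tendsto (fun a : ℝ => Real.exp (-ι*a)) (𝓝[>] (0:ℝ)) (𝓝 1) := by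
    apply Tendsto.mono_left _ nhdsWithin_le_nhds
    have : ContinuousAt (fun a : ℝ => Real.exp (-ι*a)) 0 :=
      (Real.continuous_exp.comp (continuous_const.mul continuous_id)).continuousAt
    simpa using this.tendsto
  have h4 := (t1.mul t2).mul t3
  rw [zero_mul, mul_one] at h4
  exact Tendsto.congr'
    (by filter_upwards [self_mem_nhdsWithin] using fun a ha => (heq a ha).symm) h4

private lemma my_h_tendsto_atTop (k : ℕ) (m ζ ι : ℝ) (hm : m = (k:ℝ)/2) (hm0 : 0 < m)
    (hζ : 0 < ζ) (hι : 0 < ι) :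
    Tendsto (fun a : ℝ => Real.Gamma (a+m)/Real.Gamma a * a^(ζ-1) * Real.exp (-ι*a))
      atTop (𝓝 0) := by
  have hupper : Tendsto (fun a : ℝ => (a + (k:ℝ))^(m+ζ) * Real.exp (-ι*a)) atTop (𝓝 0) := by
    have hphi : Tendsto (fun x : ℝ => x^(m+ζ) * Real.exp (-ι*x)) atTop (𝓝 0) :=
      tendsto_rpow_mul_exp_neg_mul_atTop_nhds_zero (m+ζ) ι hι
    have hcomp : Tendsto (fun a : ℝ => (a+(k:ℝ))^(m+ζ) * Real.exp (-ι*(a+(k:ℝ)))) atTop (𝓝 0) :=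
      hphi.comp (tendsto_atTop_add_const_right atTop (k:ℝ) tendsto_id)
    have h5 := hcomp.mul_const (Real.exp (ι*k))
    rw [zero_mul] at h5
    apply h5.congr
    intro a
    rw [mul_assoc, ← Real.exp_add]
    ring_nf
  apply tendsto_of_tendsto_of_tendsto_of_le_of_le' tendsto_const_nhds hupper
  · filter_upwards [eventually_ge_atTop (1:ℝ)] with a ha
    have ha' : (0:ℝ) < a := by linarith
    have h1 : 0 ≤ Real.Gamma (a+m)/Real.Gamma a :=
      div_nonneg (Real.Gamma_pos_of_pos (by linarith)).le (Real.Gamma_pos_of_pos ha').le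
    have h2 : 0 ≤ a^(ζ-1) := Real.rpow_nonneg ha'.le _
    positivity
  · filter_upwards [eventually_ge_atTop (1:ℝ)] with a ha
    have ha' : (0:ℝ) < a := by linarith
    have hak : (0:ℝ) < a + k := by positivity
    have h1 : Real.Gamma (a+m)/Real.Gamma a ≤ (a + (k:ℝ))^m := by
      rw [div_le_iff₀ (Real.Gamma_pos_of_pos ha'), hm]
      calc Real.Gamma (a + (k:ℝ)/2) ≤ Real.Gamma a * (a + (k:ℝ)) ^ ((k:ℝ)/2) :=
            my_gamma_ratio_le k a ha'
        _ = (a+(k:ℝ)) ^ ((k:ℝ)/2) * Real.Gamma a := by ring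
    have h2 : a^(ζ-1) ≤ (a + (k:ℝ))^ζ :=
      calc a^(ζ-1) ≤ a^ζ := Real.rpow_le_rpow_of_exponent_le ha (by linarith)
        _ ≤ (a+(k:ℝ))^ζ :=
            Real.rpow_le_rpow ha'.le (le_add_of_nonneg_right (Nat.cast_nonneg k)) hζ.le
    calc Real.Gamma (a+m)/Real.Gamma a * a^(ζ-1) * Real.exp (-ι*a)
        ≤ (a+(k:ℝ))^m * (a+(k:ℝ))^ζ * Real.exp (-ι*a) := by
          apply mul_le_mul_of_nonneg_right _ (Real.exp_pos _).le
          apply mul_le_mul h1 h2 (Real.rpow_nonneg ha'.le _) (Real.rpow_nonneg hak.le _)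
      _ = (a+(k:ℝ))^(m+ζ) * Real.exp (-ι*a) := by rw [← Real.rpow_add hak]

private lemma my_P_contOn (w m ζ ι : ℝ) (hw : 0 < w) (hm : 0 < m) :
    ContinuousOn (fun p : ℝ × ℝ =>
      p.2 ^ p.1 / Real.Gamma p.1 * Real.Gamma (p.1 + m) / (p.2 + w) ^ (p.1 + m)
        * p.1 ^ (ζ-1) * Real.exp (-ι * p.1)) (Ioi 0 ×ˢ Ioi 0) := by
  rintro ⟨a, b⟩ ⟨ha, hb⟩
  simp only [mem_Ioi] at ha hb
  apply ContinuousAt.continuousWithinAt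
  have c1 : ContinuousAt (fun p : ℝ × ℝ => p.2 ^ p.1) ((a, b) : ℝ × ℝ) :=
    ContinuousAt.rpow continuous_snd.continuousAt continuous_fst.continuousAt (Or.inl hb.ne')
  have c2 : ContinuousAt (fun p : ℝ × ℝ => Real.Gamma p.1) ((a, b) : ℝ × ℝ) :=
    ContinuousAt.comp (g := Real.Gamma) (f := (Prod.fst : ℝ × ℝ → ℝ)) (x := ((a, b) : ℝ × ℝ))
      (my_gammaCAt ha) continuous_fst.continuousAt
  have c3 : ContinuousAt (fun p : ℝ × ℝ => Real.Gamma (p.1 + m)) ((a, b) : ℝ × ℝ) :=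
    ContinuousAt.comp (g := Real.Gamma) (f := fun p : ℝ × ℝ => p.1 + m) (x := ((a, b) : ℝ × ℝ))
      (my_gammaCAt (by positivity : (0:ℝ) < a + m))
      ((continuous_fst.add continuous_const).continuousAt)
  have c4 : ContinuousAt (fun p : ℝ × ℝ => (p.2 + w) ^ (p.1 + m)) ((a, b) : ℝ × ℝ) :=
    ContinuousAt.rpow (continuous_snd.add continuous_const).continuousAt
      (continuous_fst.add continuous_const).continuousAt (Or.inl (by positivity))
  have c5 : ContinuousAt (fun p : ℝ × ℝ => p.1 ^ (ζ-1)) ((a, b) : ℝ × ℝ) :=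
    ContinuousAt.rpow_const continuous_fst.continuousAt (Or.inl ha.ne')
  have c6 : ContinuousAt (fun p : ℝ × ℝ => Real.exp (-ι * p.1)) ((a, b) : ℝ × ℝ) :=
    (Real.continuous_exp.comp (continuous_const.mul continuous_fst)).continuousAt
  exact ((((c1.div c2 (Real.Gamma_pos_of_pos ha).ne').mul c3).div c4
    (Real.rpow_pos_of_pos (by positivity) _).ne').mul c5).mul c6

/-- For `w > 0`, `m = k/2` with integer `k ≥ 1`, and hyperprior
parameters `ζ > 0`, `ι > 0`, the MMAP objective
`p̃(a,b) = (b^a/Γ(a)) Γ(a+m)/(b+w)^{a+m} · a^{ζ−1} e^{−ιa}`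
attains its (finite) supremum over `(0,∞)²` at some interior point `(a*, b*)`. -/
theorem mmap_finite_maximizer (w : ℝ) (hw : 0 < w)
    (k : ℕ) (hk : 1 ≤ k) (m : ℝ) (hm : m = (k : ℝ) / 2)
    (ζ ι : ℝ) (hζ : 0 < ζ) (hι : 0 < ι)
    (ptilde : ℝ → ℝ → ℝ)
    (hp : ∀ a b : ℝ, ptilde a b =
      b ^ a / Real.Gamma a * Real.Gamma (a + m) / (b + w) ^ (a + m) *
        a ^ (ζ - 1) * Real.exp (-ι * a)) :
    ∃ astar bstar : ℝ, 0 < astar ∧ 0 < bstar ∧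
      ∀ a b : ℝ, 0 < a → 0 < b → ptilde a b ≤ ptilde astar bstar := by
  have hkR : (1:ℝ) ≤ (k:ℝ) := by exact_mod_cast hk
  have hm0 : 0 < m := by rw [hm]; linarith
  set h : ℝ → ℝ := fun a => Real.Gamma (a+m)/Real.Gamma a * a^(ζ-1) * Real.exp (-ι*a)
    with hhdef
  have hhnn : ∀ a : ℝ, 0 < a → 0 ≤ h a := by
    intro a ha
    have h1 : 0 ≤ Real.Gamma (a+m)/Real.Gamma a :=
      div_nonneg (Real.Gamma_pos_of_pos (by linarith)).le (Real.Gamma_pos_of_pos ha).le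
    have h2 : 0 ≤ a^(ζ-1) := Real.rpow_nonneg ha.le _
    simp only [hhdef]
    positivity
  have hfact : ∀ a b : ℝ, 0 < a → 0 < b → ptilde a b = b^a/(b+w)^(a+m) * h a := by
    intro a b ha hb
    rw [hp]
    simp only [hhdef]
    ring
  have hPle : ∀ a b : ℝ, 0 < a → 0 < b → ptilde a b ≤ ((b+w)^m)⁻¹ * h a := by
    intro a b ha hb
    rw [hfact a b ha hb]
    have hbw : (0:ℝ) < b + w := by linarith
    have h3 : b^a/(b+w)^(a+m) ≤ ((b+w)^m)⁻¹ := by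
      rw [Real.rpow_add hbw, div_mul_eq_div_div]
      have h4 : b^a/(b+w)^a ≤ 1 :=
        div_le_one_of_le₀ (Real.rpow_le_rpow hb.le (by linarith) ha.le)
          (Real.rpow_pos_of_pos hbw a).le
      calc b^a/(b+w)^a/(b+w)^m ≤ 1/(b+w)^m :=
            div_le_div₀ zero_le_one h4 (Real.rpow_pos_of_pos hbw m) le_rfl
        _ = ((b+w)^m)⁻¹ := one_div _
    exact mul_le_mul_of_nonneg_right h3 (hhnn a ha)
  have hPlew : ∀ a b : ℝ, 0 < a → 0 < b → ptilde a b ≤ (w^m)⁻¹ * h a := by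
    intro a b ha hb
    refine (hPle a b ha hb).trans ?_
    apply mul_le_mul_of_nonneg_right _ (hhnn a ha)
    have h1 : w^m ≤ (b+w)^m := Real.rpow_le_rpow hw.le (by linarith) hm0.le
    exact inv_anti₀ (Real.rpow_pos_of_pos hw m) h1
  have hv : 0 < ptilde 1 1 := by
    rw [hp]
    refine mul_pos (mul_pos (div_pos (mul_pos (div_pos ?_ ?_) ?_) ?_) ?_) (Real.exp_pos _)
    · rw [Real.one_rpow]; norm_num
    · exact Real.Gamma_pos_of_pos one_pos
    · exact Real.Gamma_pos_of_pos (by linarith)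
    · exact Real.rpow_pos_of_pos (by linarith) _
    · exact Real.rpow_pos_of_pos one_pos _
  obtain ⟨u, hu, hsub⟩ : ∃ u ∈ Ioi (0:ℝ),
      Ioo 0 u ⊆ {a : ℝ | (w^m)⁻¹ * h a < ptilde 1 1} := by
    rw [← mem_nhdsGT_iff_exists_Ioo_subset]
    have hT0 := (my_h_tendsto_zero m ζ ι hm0 hζ).const_mul ((w^m)⁻¹)
    rw [mul_zero] at hT0
    exact hT0.eventually_lt_const hv
  set lo := min u 1 with hlodef
  have hlo0 : 0 < lo := lt_min hu one_pos
  have hlo1 : lo ≤ 1 := min_le_right _ _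
  have hsmall : ∀ a : ℝ, 0 < a → a < lo → (w^m)⁻¹ * h a < ptilde 1 1 := fun a ha halo =>
    hsub ⟨ha, lt_of_lt_of_le halo (min_le_left _ _)⟩
  obtain ⟨A, hA⟩ : ∃ A : ℝ, ∀ a ≥ A, (w^m)⁻¹ * h a < ptilde 1 1 := by
    have hTinf := (my_h_tendsto_atTop k m ζ ι hm hm0 hζ hι).const_mul ((w^m)⁻¹)
    rw [mul_zero] at hTinf
    exact eventually_atTop.mp (hTinf.eventually_lt_const hv)
  set hi := max A 1 with hhidef
  have hhi1 : (1:ℝ) ≤ hi := le_max_right _ _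
  have hlohi : lo ≤ hi := hlo1.trans hhi1
  have hIccSub : Icc lo hi ⊆ Ioi (0:ℝ) := fun x hx => lt_of_lt_of_le hlo0 hx.1
  obtain ⟨aH, haH, hmaxH⟩ := isCompact_Icc.exists_isMaxOn
    (⟨1, hlo1, hhi1⟩ : (Icc lo hi).Nonempty) ((my_h_contOn m ζ ι hm0).mono hIccSub)
  set H := h aH with hHdef
  have hHnn : 0 ≤ H := hhnn aH (hIccSub haH)
  have hhleH : ∀ a ∈ Icc lo hi, h a ≤ H := fun a ha => hmaxH ha
  set c0 : ℝ := Real.exp (-((hi+m) * |Real.log w|)) with hc0def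
  have hc0pos : 0 < c0 := Real.exp_pos _
  have hc0le : ∀ a b : ℝ, a ≤ hi → 0 < a → 0 < b → c0 ≤ (b+w)^(a+m) := by
    intro a b hahi ha hb
    have hbw : (0:ℝ) < b + w := by linarith
    have h1 : w^(a+m) ≤ (b+w)^(a+m) := Real.rpow_le_rpow hw.le (by linarith) (by linarith)
    have h2 : c0 ≤ w^(a+m) := by
      rw [Real.rpow_def_of_pos hw, hc0def]
      apply Real.exp_le_exp.mpr
      have habs : -|Real.log w| ≤ Real.log w := neg_abs_le _
      have h3 : (0:ℝ) ≤ |Real.log w| := abs_nonneg _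
      nlinarith [mul_le_mul_of_nonneg_left habs (show (0:ℝ) ≤ a+m by linarith),
        mul_le_mul_of_nonneg_right (show a+m ≤ hi+m by linarith) h3]
    exact h2.trans h1
  obtain ⟨u2, hu2, hsub2⟩ : ∃ u2 ∈ Ioi (0:ℝ),
      Ioo 0 u2 ⊆ {b : ℝ | b^lo * (c0⁻¹ * H) < ptilde 1 1} := by
    rw [← mem_nhdsGT_iff_exists_Ioo_subset]
    have t1 := (my_rpow_tendsto_zero hlo0).mul_const (c0⁻¹ * H)
    rw [zero_mul] at t1
    exact t1.eventually_lt_const hv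
  set δ := min u2 1 with hδdef
  have hδ0 : 0 < δ := lt_min hu2 one_pos
  have hδ1 : δ ≤ 1 := min_le_right _ _
  obtain ⟨B, hB⟩ : ∃ B : ℝ, ∀ b ≥ B, (b^m)⁻¹ * H < ptilde 1 1 := by
    have t2 : Tendsto (fun b : ℝ => (b^m)⁻¹) atTop (𝓝 0) :=
      (tendsto_rpow_atTop hm0).inv_tendsto_atTop
    have t3 := t2.mul_const H
    rw [zero_mul] at t3
    exact eventually_atTop.mp (t3.eventually_lt_const hv)
  set hiB := max B 1 with hiBdef
  set K : Set (ℝ × ℝ) := Icc lo hi ×ˢ Icc δ hiB with hKdef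
  have hKsub : K ⊆ Ioi 0 ×ˢ Ioi 0 := by
    rintro ⟨x, y⟩ ⟨hx, hy⟩
    exact ⟨lt_of_lt_of_le hlo0 hx.1, lt_of_lt_of_le hδ0 hy.1⟩
  have h11K : ((1:ℝ), (1:ℝ)) ∈ K := ⟨⟨hlo1, hhi1⟩, ⟨hδ1, le_max_right _ _⟩⟩
  have hPc : ContinuousOn (fun p : ℝ × ℝ => ptilde p.1 p.2) K := by
    have heq : (fun p : ℝ × ℝ => ptilde p.1 p.2) = fun p : ℝ × ℝ =>
        p.2 ^ p.1 / Real.Gamma p.1 * Real.Gamma (p.1 + m) / (p.2 + w) ^ (p.1 + m)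
          * p.1 ^ (ζ-1) * Real.exp (-ι * p.1) := by
      funext p; exact hp p.1 p.2
    rw [heq]
    exact (my_P_contOn w m ζ ι hw hm0).mono hKsub
  obtain ⟨⟨astar, bstar⟩, hqK, hqmax⟩ := (isCompact_Icc.prod isCompact_Icc).exists_isMaxOn
    ⟨((1:ℝ), (1:ℝ)), h11K⟩ hPc
  refine ⟨astar, bstar, lt_of_lt_of_le hlo0 hqK.1.1, lt_of_lt_of_le hδ0 hqK.2.1, ?_⟩
  have hvle : ptilde 1 1 ≤ ptilde astar bstar := hqmax h11K
  intro a b ha hb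
  by_cases hK : (a, b) ∈ K
  · exact hqmax hK
  · have hlt : ptilde a b < ptilde 1 1 := by
      rcases lt_or_ge a lo with h1 | h1
      · exact lt_of_le_of_lt (hPlew a b ha hb) (hsmall a ha h1)
      rcases lt_or_ge hi a with h2 | h2
      · exact lt_of_le_of_lt (hPlew a b ha hb) (hA a (le_trans (le_max_left A 1) h2.le))
      have haIcc : a ∈ Icc lo hi := ⟨h1, h2⟩
      have hhaH : h a ≤ H := hhleH a haIcc
      rcases lt_or_ge b δ with h3 | h3
      · have hb1 : b ≤ 1 := le_trans h3.le hδ1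
        have e1 : b^a ≤ b^lo := Real.rpow_le_rpow_of_exponent_ge hb hb1 h1
        have e2 : c0 ≤ (b+w)^(a+m) := hc0le a b h2 ha hb
        have e3 : b^a/(b+w)^(a+m) ≤ b^lo/c0 :=
          div_le_div₀ (Real.rpow_nonneg hb.le lo) e1 hc0pos e2
        calc ptilde a b = b^a/(b+w)^(a+m) * h a := hfact a b ha hb
          _ ≤ (b^lo/c0) * H := mul_le_mul e3 hhaH (hhnn a ha)
              (div_nonneg (Real.rpow_nonneg hb.le lo) hc0pos.le)
          _ = b^lo * (c0⁻¹ * H) := by rw [div_eq_mul_inv]; ring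
          _ < ptilde 1 1 := hsub2 ⟨hb, lt_of_lt_of_le h3 (min_le_left _ _)⟩
      rcases le_or_gt b hiB with h4 | h4
      · exact absurd (⟨haIcc, ⟨h3, h4⟩⟩ : (a, b) ∈ K) hK
      · have e1 : b^m ≤ (b+w)^m := Real.rpow_le_rpow hb.le (by linarith) hm0.le
        have e2 : ((b+w)^m)⁻¹ ≤ (b^m)⁻¹ :=
          inv_anti₀ (Real.rpow_pos_of_pos hb m) e1
        calc ptilde a b ≤ ((b+w)^m)⁻¹ * h a := hPle a b ha hb
          _ ≤ (b^m)⁻¹ * H := mul_le_mul e2 hhaH (hhnn a ha)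
              (inv_nonneg.2 (Real.rpow_nonneg hb.le m))
          _ < ptilde 1 1 := hB b (le_trans (le_max_left B 1) h4.le)
    linarith
end

section
/- Let ν>2, σ>0 and μ, y*∈ℝ. Let g be the non-standardized Student-t density with ν degrees of freedom, location μ, and scale σ: g(t) = Γ((ν+1)/2)/(σ√(νπ)Γ(ν/2)) · (1+(t−μ)²/(νσ²))^{−(ν+1)/2}. Set I = y* − μ and m = √(ν/(ν−2)). Then the expected improvement under g has the closed form ∫_ℝ max(y*−t, 0) · g(t) dt = I·Φ_ν(I/σ) + m·σ·φ_{ν−2}(I/(mσ)), where φ_ν and Φ_ν denote respectively the standard Student-t density with ν degrees of freedom and its cumulative distribution function. -/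
open MeasureTheory
open Real Filter Set

/-- The standard Student-t density with `ν` degrees of freedom. -/
noncomputable def tpdf (ν x : ℝ) : ℝ :=
  Real.Gamma ((ν + 1) / 2) / (Real.sqrt (ν * Real.pi) * Real.Gamma (ν / 2)) *
    (1 + x ^ 2 / ν) ^ (-((ν + 1) / 2))

/-- The cumulative distribution function of the standard Student-t distribution
with `ν` degrees of freedom. -/
noncomputable def tcdf (ν x : ℝ) : ℝ := ∫ t in Set.Iic x, tpdf ν t

/-- The non-standardized Student-t density with `ν` degrees of freedom,
location `μ` and scale `σ`. -/
noncomputable def studentDensity (ν μ σ t : ℝ) : ℝ :=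
  Real.Gamma ((ν + 1) / 2) / (σ * Real.sqrt (ν * Real.pi) * Real.Gamma (ν / 2)) *
    (1 + (t - μ) ^ 2 / (ν * σ ^ 2)) ^ (-((ν + 1) / 2))

noncomputable def tc (ν : ℝ) : ℝ :=
  Real.Gamma ((ν + 1) / 2) / (Real.sqrt (ν * Real.pi) * Real.Gamma (ν / 2))

lemma tc_pos {ν : ℝ} (hν : 0 < ν) : 0 < tc ν := by
  have h1 : 0 < Real.Gamma ((ν + 1) / 2) := Real.Gamma_pos_of_pos (by linarith)
  have h2 : 0 < Real.Gamma (ν / 2) := Real.Gamma_pos_of_pos (by linarith)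
  have h3 : 0 < Real.sqrt (ν * Real.pi) := Real.sqrt_pos.2 (by positivity)
  exact div_pos h1 (by positivity)

lemma base_pos {ν : ℝ} (hν : 0 < ν) (x : ℝ) : 0 < 1 + x ^ 2 / ν := by positivity

lemma one_le_base {ν : ℝ} (hν : 0 < ν) (x : ℝ) : 1 ≤ 1 + x ^ 2 / ν := by
  have := div_nonneg (sq_nonneg x) hν.le
  linarith

lemma tpdf_nonneg {ν : ℝ} (hν : 0 < ν) (x : ℝ) : 0 ≤ tpdf ν x :=
  mul_nonneg (tc_pos hν).le (Real.rpow_nonneg (base_pos hν x).le _)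

lemma continuous_tpdf {ν : ℝ} (hν : 0 < ν) : Continuous (tpdf ν) := by
  apply Continuous.mul continuous_const
  exact (Continuous.rpow_const (by continuity) fun x => Or.inl (base_pos hν x).ne')

lemma tpdf_le {ν : ℝ} (hν : 1 ≤ ν) (x : ℝ) :
    tpdf ν x ≤ tc ν * ν * (1 + x ^ 2)⁻¹ := by
  have hν0 : (0:ℝ) < ν := by linarith
  have hb := one_le_base hν0 x
  have h1 : (1 + x ^ 2 / ν) ^ (-((ν + 1) / 2)) ≤ (1 + x ^ 2 / ν) ^ (-1 : ℝ) :=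
    Real.rpow_le_rpow_of_exponent_le hb (by linarith)
  have h2 : (1 + x ^ 2 / ν) ^ (-1 : ℝ) = (1 + x ^ 2 / ν)⁻¹ := Real.rpow_neg_one _
  have h3 : (1 + x ^ 2 / ν)⁻¹ ≤ ν * (1 + x ^ 2)⁻¹ := by
    have e : (1 + x ^ 2 / ν)⁻¹ = ν / (ν + x ^ 2) := by
      rw [eq_div_iff (by positivity), inv_mul_eq_div, div_eq_iff (by positivity)]
      field_simp
    rw [e, ← div_eq_mul_inv]
    have hx2 : (1:ℝ) + x ^ 2 ≤ ν + x ^ 2 := by linarith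
    gcongr
  calc tpdf ν x ≤ tc ν * (ν * (1 + x ^ 2)⁻¹) := by
        apply mul_le_mul_of_nonneg_left _ (tc_pos hν0).le
        calc (1 + x ^ 2 / ν) ^ (-((ν + 1) / 2)) ≤ (1 + x ^ 2 / ν) ^ (-1 : ℝ) := h1
          _ = (1 + x ^ 2 / ν)⁻¹ := h2
          _ ≤ ν * (1 + x ^ 2)⁻¹ := h3
    _ = tc ν * ν * (1 + x ^ 2)⁻¹ := by ring


lemma integrable_tpdf {ν : ℝ} (hν : 1 ≤ ν) : Integrable (tpdf ν) := by
  have hν0 : (0:ℝ) < ν := by linarith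
  refine Integrable.mono' ((integrable_inv_one_add_sq).const_mul (tc ν * ν))
    (continuous_tpdf hν0).aestronglyMeasurable ?_
  filter_upwards with x
  rw [Real.norm_of_nonneg (tpdf_nonneg hν0 x)]
  exact tpdf_le hν x

lemma abs_mul_tpdf_le {ν : ℝ} (hν : 2 ≤ ν) (x : ℝ) :
    |x| * tpdf ν x ≤ tc ν * (Real.sqrt ν * ν) * (1 + x ^ 2)⁻¹ := by
  have hν0 : (0:ℝ) < ν := by linarith
  have hb := one_le_base hν0 x
  have hb0 := base_pos hν0 x
  have h1 : (1 + x ^ 2 / ν) ^ (-((ν + 1) / 2)) ≤ (1 + x ^ 2 / ν) ^ (-(3 / 2) : ℝ) :=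
    Real.rpow_le_rpow_of_exponent_le hb (by linarith)
  have hsplit : (1 + x ^ 2 / ν) ^ (-(3 / 2) : ℝ)
      = (1 + x ^ 2 / ν) ^ (-(1 / 2) : ℝ) * (1 + x ^ 2 / ν)⁻¹ := by
    rw [← Real.rpow_neg_one, ← Real.rpow_add hb0]
    norm_num
  have habs : |x| * (1 + x ^ 2 / ν) ^ (-(1 / 2) : ℝ) ≤ Real.sqrt ν := by
    rw [Real.rpow_neg hb0.le, ← Real.sqrt_eq_rpow]
    rw [mul_inv_le_iff₀ (Real.sqrt_pos.2 hb0), ← Real.sqrt_mul hν0.le]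
    have : ν * (1 + x ^ 2 / ν) = ν + x ^ 2 := by field_simp
    rw [this]
    calc |x| = Real.sqrt (x ^ 2) := (Real.sqrt_sq_eq_abs x).symm
      _ ≤ Real.sqrt (ν + x ^ 2) := Real.sqrt_le_sqrt (by linarith)
  have hinv : (1 + x ^ 2 / ν)⁻¹ ≤ ν * (1 + x ^ 2)⁻¹ := by
    have e : (1 + x ^ 2 / ν)⁻¹ = ν / (ν + x ^ 2) := by
      rw [eq_div_iff (by positivity), inv_mul_eq_div, div_eq_iff (by positivity)]
      field_simp
    rw [e, ← div_eq_mul_inv]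
    have hx2 : (1:ℝ) + x ^ 2 ≤ ν + x ^ 2 := by linarith
    gcongr
  calc |x| * tpdf ν x = tc ν * (|x| * (1 + x ^ 2 / ν) ^ (-((ν + 1) / 2))) := by
        unfold tpdf tc; ring
    _ ≤ tc ν * (|x| * ((1 + x ^ 2 / ν) ^ (-(1 / 2) : ℝ) * (1 + x ^ 2 / ν)⁻¹)) := by
        apply mul_le_mul_of_nonneg_left _ (tc_pos hν0).le
        rw [← hsplit]
        exact mul_le_mul_of_nonneg_left h1 (abs_nonneg x)
    _ = (|x| * (1 + x ^ 2 / ν) ^ (-(1 / 2) : ℝ)) * (tc ν * (1 + x ^ 2 / ν)⁻¹) := by ring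
    _ ≤ Real.sqrt ν * (tc ν * (ν * (1 + x ^ 2)⁻¹)) := by
        apply mul_le_mul habs _ (mul_nonneg (tc_pos hν0).le (by positivity)) (Real.sqrt_nonneg ν)
        exact mul_le_mul_of_nonneg_left hinv (tc_pos hν0).le
    _ = tc ν * (Real.sqrt ν * ν) * (1 + x ^ 2)⁻¹ := by ring

lemma integrable_mul_tpdf {ν : ℝ} (hν : 2 ≤ ν) : Integrable (fun x => x * tpdf ν x) := by
  have hν0 : (0:ℝ) < ν := by linarith
  refine Integrable.mono' ((integrable_inv_one_add_sq).const_mul (tc ν * (Real.sqrt ν * ν)))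
    (Continuous.aestronglyMeasurable (by exact continuous_id.mul (continuous_tpdf hν0))) ?_
  filter_upwards with x
  rw [norm_mul, Real.norm_of_nonneg (tpdf_nonneg hν0 x), Real.norm_eq_abs]
  exact abs_mul_tpdf_le hν x

lemma tcdf_eq {ν : ℝ} (hν : 1 ≤ ν) (x : ℝ) :
    tcdf ν x = tcdf ν 0 + ∫ t in (0:ℝ)..x, tpdf ν t := by
  have h0 : IntegrableOn (tpdf ν) (Set.Iic (0:ℝ)) := (integrable_tpdf hν).integrableOn
  have hx : IntegrableOn (tpdf ν) (Set.Iic x) := (integrable_tpdf hν).integrableOn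
  have h := intervalIntegral.integral_Iic_sub_Iic h0 hx
  unfold tcdf
  linarith [h]

lemma hasDerivAt_tcdf {ν : ℝ} (hν : 1 ≤ ν) (x : ℝ) :
    HasDerivAt (tcdf ν) (tpdf ν x) x := by
  have hν0 : (0:ℝ) < ν := by linarith
  have h : HasDerivAt (fun u => tcdf ν 0 + ∫ t in (0:ℝ)..u, tpdf ν t) (tpdf ν x) x := by
    apply HasDerivAt.const_add
    exact intervalIntegral.integral_hasDerivAt_right
      ((integrable_tpdf hν).intervalIntegrable)
      (continuous_tpdf hν0).aestronglyMeasurable.stronglyMeasurableAtFilter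
      (continuous_tpdf hν0).continuousAt
  exact h.congr_of_eventuallyEq (Filter.Eventually.of_forall fun u => tcdf_eq hν u)

lemma tendsto_tcdf_atBot {ν : ℝ} (hν : 1 ≤ ν) :
    Filter.Tendsto (tcdf ν) Filter.atBot (nhds 0) := by
  have hν0 : (0:ℝ) < ν := by linarith
  have hb : ∀ u : ℝ, tcdf ν u ≤ tc ν * ν * (Real.arctan u + Real.pi / 2) := by
    intro u
    have : tcdf ν u ≤ ∫ t in Set.Iic u, tc ν * ν * (1 + t ^ 2)⁻¹ := by
      apply setIntegral_mono_on ((integrable_tpdf hν).integrableOn)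
        ((integrable_inv_one_add_sq.const_mul _).integrableOn) measurableSet_Iic
      exact fun t _ => tpdf_le hν t
    calc tcdf ν u ≤ ∫ t in Set.Iic u, tc ν * ν * (1 + t ^ 2)⁻¹ := this
      _ = tc ν * ν * ∫ t in Set.Iic u, (1 + t ^ 2)⁻¹ := by
          rw [integral_const_mul]
      _ = tc ν * ν * (Real.arctan u + Real.pi / 2) := by
          rw [integral_Iic_inv_one_add_sq]
  have h0 : ∀ u : ℝ, 0 ≤ tcdf ν u := fun u =>
    setIntegral_nonneg measurableSet_Iic fun t _ => tpdf_nonneg hν0 t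
  have hlim : Filter.Tendsto (fun u => tc ν * ν * (Real.arctan u + Real.pi / 2))
      Filter.atBot (nhds 0) := by
    have : Filter.Tendsto (fun u => Real.arctan u + Real.pi / 2) Filter.atBot
        (nhds (-(Real.pi / 2) + Real.pi / 2)) :=
      ((tendsto_nhds_of_tendsto_nhdsWithin Real.tendsto_arctan_atBot).add tendsto_const_nhds)
    simpa using this.const_mul (tc ν * ν)
  exact squeeze_zero h0 hb hlim

lemma hasDerivAt_psi {ν : ℝ} (hν : 2 < ν) (x : ℝ) :
    HasDerivAt (fun u => tc ν * (ν / (ν - 1)) * (1 + u ^ 2 / ν) ^ (-((ν - 1) / 2)))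
      (-(x * tpdf ν x)) x := by
  have hν0 : (0:ℝ) < ν := by linarith
  have h1 : HasDerivAt (fun u : ℝ => 1 + u ^ 2 / ν) (2 * x / ν) x := by
    have := ((hasDerivAt_pow 2 x).div_const ν).const_add (1:ℝ)
    simpa using this
  have h2 := h1.rpow_const (p := -((ν - 1) / 2)) (Or.inl (base_pos hν0 x).ne')
  have h3 := h2.const_mul (tc ν * (ν / (ν - 1)))
  refine h3.congr_deriv ?_
  have he : -((ν - 1) / 2) - 1 = -((ν + 1) / 2) := by ring
  rw [he]
  unfold tpdf tc
  have hν1 : ν - 1 ≠ 0 := by linarith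
  field_simp

lemma tendsto_psi_atBot {ν : ℝ} (hν : 2 < ν) :
    Filter.Tendsto (fun u => tc ν * (ν / (ν - 1)) * (1 + u ^ 2 / ν) ^ (-((ν - 1) / 2)))
      Filter.atBot (nhds 0) := by
  have hν0 : (0:ℝ) < ν := by linarith
  have h1 : Filter.Tendsto (fun u : ℝ => 1 + u ^ 2 / ν) Filter.atBot Filter.atTop := by
    apply Filter.tendsto_atTop_add_const_left
    apply Filter.Tendsto.atTop_div_const hν0
    have habs : Filter.Tendsto (fun u : ℝ => |u| ^ 2) Filter.atBot Filter.atTop :=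
      (tendsto_pow_atTop two_ne_zero).comp tendsto_abs_atBot_atTop
    exact habs.congr fun u => sq_abs u
  have h2 : Filter.Tendsto (fun u : ℝ => (1 + u ^ 2 / ν) ^ (-((ν - 1) / 2)))
      Filter.atBot (nhds 0) :=
    (tendsto_rpow_neg_atTop (by linarith : (0:ℝ) < (ν - 1) / 2)).comp h1
  simpa using h2.const_mul (tc ν * (ν / (ν - 1)))

lemma key_integral {ν : ℝ} (hν : 2 < ν) (x0 : ℝ) :
    ∫ x in Set.Iic x0, (x0 - x) * tpdf ν x
      = x0 * tcdf ν x0 + tc ν * (ν / (ν - 1)) * (1 + x0 ^ 2 / ν) ^ (-((ν - 1) / 2)) := by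
  have hν1 : (1:ℝ) ≤ ν := by linarith
  set F : ℝ → ℝ := fun u =>
    x0 * tcdf ν u + tc ν * (ν / (ν - 1)) * (1 + u ^ 2 / ν) ^ (-((ν - 1) / 2)) with hF
  have hderiv : ∀ x ∈ Set.Iic x0, HasDerivAt F ((x0 - x) * tpdf ν x) x := by
    intro x _
    have h := ((hasDerivAt_tcdf hν1 x).const_mul x0).add (hasDerivAt_psi hν x)
    refine h.congr_deriv ?_
    ring
  have hint : IntegrableOn (fun x => (x0 - x) * tpdf ν x) (Set.Iic x0) := by
    have : Integrable (fun x => (x0 - x) * tpdf ν x) := by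
      have h := ((integrable_tpdf hν1).const_mul x0).sub (integrable_mul_tpdf hν.le)
      exact h.congr (Filter.Eventually.of_forall fun x => by simp [Pi.sub_apply]; ring)
    exact this.integrableOn
  have hlim : Filter.Tendsto F Filter.atBot (nhds 0) := by
    have := ((tendsto_tcdf_atBot hν1).const_mul x0).add (tendsto_psi_atBot hν)
    simpa using this
  have := integral_Iic_of_hasDerivAt_of_tendsto' hderiv hint hlim
  rw [this, hF]
  simp

lemma psi_eq {ν x0 m : ℝ} (hν : 2 < ν) (hm : m = Real.sqrt (ν / (ν - 2))) :
    tc ν * (ν / (ν - 1)) * (1 + x0 ^ 2 / ν) ^ (-((ν - 1) / 2))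
      = m * tpdf (ν - 2) (x0 / m) := by
  have hν0 : (0:ℝ) < ν := by linarith
  have hδ : (0:ℝ) < ν - 2 := by linarith
  have hm0 : 0 < m := by rw [hm]; positivity
  have hm2 : m ^ 2 = ν / (ν - 2) := by rw [hm]; exact Real.sq_sqrt (by positivity)
  have hbase : 1 + (x0 / m) ^ 2 / (ν - 2) = 1 + x0 ^ 2 / ν := by
    rw [div_pow, hm2]
    field_simp
  have hexp : ν - 2 + 1 = ν - 1 := by ring
  unfold tpdf
  rw [hexp, hbase]
  -- coefficient identity
  have hA : 0 < Real.Gamma ((ν - 1) / 2) := Real.Gamma_pos_of_pos (by linarith)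
  have hB : 0 < Real.Gamma ((ν - 2) / 2) := Real.Gamma_pos_of_pos (by linarith)
  have hg1 : Real.Gamma ((ν + 1) / 2) = (ν - 1) / 2 * Real.Gamma ((ν - 1) / 2) := by
    rw [show (ν + 1) / 2 = (ν - 1) / 2 + 1 by ring,
      Real.Gamma_add_one (ne_of_gt (by linarith : (0:ℝ) < (ν - 1) / 2))]
  have hg2 : Real.Gamma (ν / 2) = (ν - 2) / 2 * Real.Gamma ((ν - 2) / 2) := by
    rw [show ν / 2 = (ν - 2) / 2 + 1 by ring,
      Real.Gamma_add_one (ne_of_gt (by linarith : (0:ℝ) < (ν - 2) / 2))]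
  have hsν : Real.sqrt ν ^ 2 = ν := Real.sq_sqrt hν0.le
  have hsδ : Real.sqrt (ν - 2) ^ 2 = ν - 2 := Real.sq_sqrt hδ.le
  have hsν0 : 0 < Real.sqrt ν := Real.sqrt_pos.2 hν0
  have hsδ0 : 0 < Real.sqrt (ν - 2) := Real.sqrt_pos.2 hδ
  have hsπ0 : 0 < Real.sqrt Real.pi := Real.sqrt_pos.2 Real.pi_pos
  have hmδ : m * Real.sqrt (ν - 2) = Real.sqrt ν := by
    rw [hm, ← Real.sqrt_mul (by positivity)]
    congr 1
    field_simp
  have hsplit1 : Real.sqrt (ν * Real.pi) = Real.sqrt ν * Real.sqrt Real.pi :=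
    Real.sqrt_mul hν0.le _
  have hsplit2 : Real.sqrt ((ν - 2) * Real.pi) = Real.sqrt (ν - 2) * Real.sqrt Real.pi :=
    Real.sqrt_mul hδ.le _
  have hcoef : tc ν * (ν / (ν - 1))
      = m * (Real.Gamma ((ν - 1) / 2) /
          (Real.sqrt ((ν - 2) * Real.pi) * Real.Gamma ((ν - 2) / 2))) := by
    unfold tc
    rw [hg1, hg2, hsplit1, hsplit2]
    have hν1 : ν - (1:ℝ) ≠ 0 := by linarith
    have hm2' : m ^ 2 * (ν - 2) = ν := by
      rw [hm2]; field_simp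
    field_simp
    linear_combination (-Real.sqrt (ν - 2) * hm2' + m * (ν - 2) * hmδ)
  rw [← mul_assoc, hcoef]

/-- Closed form of the expected improvement under a non-standardized
Student-t posterior with `ν > 2` degrees of freedom, location `μ` and scale `σ > 0`:
with `I = y* − μ` and `m = √(ν/(ν−2))`,
`∫ max(y*−t, 0) g(t) dt = I·Φ_ν(I/σ) + m·σ·φ_{ν−2}(I/(mσ))`. -/
theorem hei_closed_form (ν σ μ ystar : ℝ) (hν : 2 < ν) (hσ : 0 < σ)
    (I : ℝ) (hI : I = ystar - μ) (m : ℝ) (hm : m = Real.sqrt (ν / (ν - 2))) :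
    (∫ t : ℝ, max (ystar - t) 0 * studentDensity ν μ σ t) =
      I * tcdf ν (I / σ) + m * σ * tpdf (ν - 2) (I / (m * σ)) := by
  have hν0 : (0:ℝ) < ν := by linarith
  have hν1 : (1:ℝ) ≤ ν := by linarith
  have hm0 : 0 < m := by
    rw [hm]; exact Real.sqrt_pos.2 (by apply div_pos <;> linarith)
  set x0 : ℝ := I / σ with hx0
  set g : ℝ → ℝ := fun t => max (ystar - t) 0 * studentDensity ν μ σ t with hg
  have key : ∀ x : ℝ, g (σ * x + μ) = max (x0 - x) 0 * tpdf ν x := by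
    intro x
    have hsd : studentDensity ν μ σ (σ * x + μ) = σ⁻¹ * tpdf ν x := by
      unfold studentDensity tpdf
      have hb : (σ * x + μ - μ) ^ 2 / (ν * σ ^ 2) = x ^ 2 / ν := by
        field_simp
        ring
      rw [hb]
      ring
    have hmax : max (ystar - (σ * x + μ)) 0 = σ * max (x0 - x) 0 := by
      have h' : ystar - (σ * x + μ) = σ * (x0 - x) := by
        rw [hx0, hI]
        field_simp
        ring
      rw [h', mul_max_of_nonneg _ _ hσ.le, mul_zero]
    show max (ystar - (σ * x + μ)) 0 * studentDensity ν μ σ (σ * x + μ)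
        = max (x0 - x) 0 * tpdf ν x
    rw [hmax, hsd]
    field_simp
  have h2 : ∫ t, g t = ∫ t, g (t + μ) := (integral_add_right_eq_self g μ).symm
  have h3 : (∫ x, g (σ * x + μ)) = |σ⁻¹| • ∫ t, g (t + μ) :=
    MeasureTheory.Measure.integral_comp_mul_left (fun t => g (t + μ)) σ
  have h4 : ∫ t, g t = σ * ∫ x, g (σ * x + μ) := by
    rw [h3, h2, smul_eq_mul, ← mul_assoc, abs_inv, abs_of_pos hσ,
      mul_inv_cancel₀ hσ.ne', one_mul]
  have h5 : (∫ x, g (σ * x + μ)) = ∫ x, max (x0 - x) 0 * tpdf ν x :=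
    integral_congr_ae (Filter.Eventually.of_forall key)
  have h6 : (∫ x, max (x0 - x) 0 * tpdf ν x)
      = x0 * tcdf ν x0 + m * tpdf (ν - 2) (x0 / m) := by
    have h1 : (fun x => max (x0 - x) 0 * tpdf ν x)
        = Set.indicator (Set.Iic x0) (fun x => (x0 - x) * tpdf ν x) := by
      funext x
      by_cases hx : x ≤ x0
      · rw [Set.indicator_of_mem (by exact hx), max_eq_left (by linarith)]
      · rw [Set.indicator_of_notMem (by simpa using hx),
          max_eq_right (by linarith), zero_mul]
    rw [h1, MeasureTheory.integral_indicator measurableSet_Iic, key_integral hν x0,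
      psi_eq hν hm]
  show (∫ t, g t) = I * tcdf ν (I / σ) + m * σ * tpdf (ν - 2) (I / (m * σ))
  rw [h4, h5, h6]
  have hx0σ : σ * x0 = I := by rw [hx0]; field_simp
  have hx0m : x0 / m = I / (m * σ) := by
    rw [hx0, div_div, mul_comm σ m]
  rw [mul_add, ← mul_assoc, hx0σ, hx0m]
  ring
end

section
/- Let ν>2, σ>0 and μ, y*∈ℝ. Let g be the non-standardized Student-t density with ν degrees of freedom, location μ, and scale σ: g(t) = Γ((ν+1)/2)/(σ√(νπ)Γ(ν/2)) · (1+(t−μ)²/(νσ²))^{−(ν+1)/2}. Set m = √(ν/(ν−2)). Then the lower partial mean satisfies ∫_{−∞}^{y*} (μ − t) · g(t) dt = m·σ·φ_{ν−2}((y*−μ)/(mσ)), where φ_ν denotes the standard Student-t density with ν degrees of freedom. -/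
open MeasureTheory

lemma student_aux (a d sp σ G1 G2 ν : ℝ) (ha : a^2 = ν) (hd : d^2 = ν - 2)
    (ha0 : 0 < a) (hd0 : 0 < d) (hsp : 0 < sp) (hσ : 0 < σ)
    (hG1 : 0 < G1) (hG2 : 0 < G2) (h1 : (0:ℝ) < ν - 1) :
    (ν-1)/2*G1 / (σ*(a*sp)*((ν-2)/2*G2)) * (ν*σ^2) / (ν-1) = a/d*σ*(G1/(d*sp*G2)) := by
  subst ha
  rw [← hd]
  have h2 : d^2 ≠ 0 := by positivity
  have h3 : a^2 - 1 ≠ 0 := ne_of_gt h1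
  field_simp

open Filter Set Topology

/-- Lower partial mean of a non-standardized Student-t density with
`ν > 2` degrees of freedom, location `μ` and scale `σ > 0`: with `m = √(ν/(ν−2))`,
`∫_{−∞}^{y*} (μ − t) g(t) dt = m·σ·φ_{ν−2}((y*−μ)/(mσ))`. -/
theorem student_lower_partial_mean (ν σ μ ystar : ℝ) (hν : 2 < ν) (hσ : 0 < σ)
    (m : ℝ) (hm : m = Real.sqrt (ν / (ν - 2))) :
    (∫ t in Set.Iic ystar, (μ - t) * studentDensity ν μ σ t) =
      m * σ * tpdf (ν - 2) ((ystar - μ) / (m * σ)) := by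
  have hν0 : (0:ℝ) < ν := by linarith
  have hd0 : (0:ℝ) < ν - 2 := by linarith
  have h10 : (0:ℝ) < ν - 1 := by linarith
  set k := ν * σ ^ 2 with hk
  have hk0 : (0:ℝ) < k := by positivity
  set c := Real.Gamma ((ν + 1) / 2) / (σ * Real.sqrt (ν * Real.pi) * Real.Gamma (ν / 2)) with hc
  set p : ℝ := -((ν - 1)/2) with hp
  set f' : ℝ → ℝ := fun t => (μ - t) * studentDensity ν μ σ t with hf'
  set F : ℝ → ℝ := fun t => c * k / (ν - 1) * (1 + (t - μ)^2 / k) ^ p with hF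
  have hsd : ∀ t : ℝ, studentDensity ν μ σ t = c * (1 + (t - μ)^2 / k) ^ (-((ν+1)/2)) := by
    intro t; rw [studentDensity]
  have hc0 : 0 ≤ c := by
    rw [hc]
    have h1 := Real.Gamma_nonneg_of_nonneg (show (0:ℝ) ≤ (ν+1)/2 by linarith)
    have h2 := Real.Gamma_nonneg_of_nonneg (show (0:ℝ) ≤ ν/2 by linarith)
    positivity
  -- derivative
  have hderiv : ∀ t : ℝ, HasDerivAt F (f' t) t := by
    intro t
    have hu0 : (0:ℝ) < 1 + (t - μ)^2 / k := by positivity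
    have hu : HasDerivAt (fun t : ℝ => 1 + (t - μ)^2 / k) (2 * (t - μ) / k) t := by
      have : HasDerivAt (fun t : ℝ => (t - μ)^2) (2 * (t - μ)) t := by
        simpa using ((hasDerivAt_id t).sub_const μ).fun_pow 2
      simpa using (this.div_const k).const_add 1
    have hr := (Real.hasDerivAt_rpow_const (x := 1 + (t - μ)^2 / k) (p := p)
      (Or.inl (ne_of_gt hu0))).comp t hu
    have h2 : HasDerivAt F _ t := hr.const_mul (c * k / (ν - 1))
    convert h2 using 1
    have hp1 : p - 1 = -((ν+1)/2) := by rw [hp]; ring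
    show (μ - t) * studentDensity ν μ σ t
      = c * k / (ν - 1) * (p * (1 + (t - μ)^2 / k) ^ (p - 1) * (2 * (t - μ) / k))
    rw [hsd t, hp1, hp]
    field_simp
    ring
  -- limit at -infinity
  have htend : Tendsto F atBot (nhds 0) := by
    have h1 : Tendsto (fun t : ℝ => t - μ) atBot atBot :=
      tendsto_atBot_add_const_right _ _ tendsto_id
    have h2 : Tendsto (fun t : ℝ => |t - μ|) atBot atTop :=
      tendsto_abs_atBot_atTop.comp h1
    have h3 : Tendsto (fun t : ℝ => (t - μ)^2) atBot atTop := by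
      have := (tendsto_pow_atTop (n := 2) two_ne_zero).comp h2
      simpa [Function.comp_def, sq_abs] using this
    have h4 : Tendsto (fun t : ℝ => 1 + (t - μ)^2 / k) atBot atTop :=
      tendsto_atTop_add_const_left _ _ (h3.atTop_div_const hk0)
    have h5 : Tendsto (fun x : ℝ => x ^ p) atTop (nhds 0) := by
      have := tendsto_rpow_neg_atTop (y := (ν-1)/2) (by linarith)
      simpa [hp] using this
    have := (h5.comp h4).const_mul (c * k / (ν - 1))
    simpa [hF, Function.comp_def] using this
  -- continuity of f'
  have hcontf' : Continuous f' := by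
    apply Continuous.mul (by continuity)
    apply Continuous.mul continuous_const
    apply Continuous.rpow_const
    · continuity
    · intro t; left; positivity
  -- nonnegativity
  have hFnonneg : ∀ t, 0 ≤ F t := by
    intro t
    have h0 : (0:ℝ) < 1 + (t - μ)^2 / k := by positivity
    have h1 := Real.rpow_nonneg h0.le p
    rw [hF]; positivity
  have hf'nonneg : ∀ t, t ≤ μ → 0 ≤ f' t := by
    intro t ht
    show 0 ≤ (μ - t) * studentDensity ν μ σ t
    rw [hsd t]
    have h0 : (0:ℝ) < 1 + (t - μ)^2 / k := by positivity
    have h1 := Real.rpow_nonneg h0.le (-((ν+1)/2))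
    have h2 : 0 ≤ μ - t := by linarith
    positivity
  set b := min μ ystar with hb
  -- integrability
  have hint : IntegrableOn f' (Set.Iic ystar) := by
    have hII : ∀ a b : ℝ, IntervalIntegrable f' volume a b :=
      fun a b => hcontf'.intervalIntegrable a b
    have hIIn : ∀ a b : ℝ, IntervalIntegrable (fun x => ‖f' x‖) volume a b :=
      fun a b => hcontf'.norm.intervalIntegrable a b
    set I : ℝ := F b + ∫ x in b..ystar, ‖f' x‖ with hI
    apply integrableOn_Iic_of_intervalIntegral_norm_bounded (f := f') (μ := volume)
      (a := fun x : ℝ => x) (l := atBot) I ystar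
      (fun i => hcontf'.integrableOn_Ioc)
      tendsto_id
    filter_upwards [Iic_mem_atBot b] with a (ha : a ≤ b)
    have hsplit : (∫ x in a..ystar, ‖f' x‖) = (∫ x in a..b, ‖f' x‖) + ∫ x in b..ystar, ‖f' x‖ :=
      (intervalIntegral.integral_add_adjacent_intervals (hIIn a b) (hIIn b ystar)).symm
    rw [hsplit]
    have h1 : (∫ x in a..b, ‖f' x‖) = ∫ x in a..b, f' x := by
      apply intervalIntegral.integral_congr
      intro x hx
      rw [Set.uIcc_of_le ha] at hx
      exact Real.norm_of_nonneg (hf'nonneg x (le_trans hx.2 (min_le_left _ _)))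
    have h2 : (∫ x in a..b, f' x) = F b - F a :=
      intervalIntegral.integral_eq_sub_of_hasDerivAt (fun x _ => hderiv x) (hII a b)
    rw [hI, h1, h2]
    have := hFnonneg a
    linarith
  -- FTC
  have hFTC : (∫ t in Set.Iic ystar, f' t) = F ystar - 0 :=
    integral_Iic_of_hasDerivAt_of_tendsto' (fun x _ => hderiv x) hint htend
  rw [show (∫ t in Set.Iic ystar, (μ - t) * studentDensity ν μ σ t) = ∫ t in Set.Iic ystar, f' t
    from rfl, hFTC, sub_zero]
  -- final algebra
  have hm0 : 0 < m := by rw [hm]; exact Real.sqrt_pos.mpr (by positivity)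
  have hm2 : m ^ 2 = ν / (ν - 2) := by rw [hm]; exact Real.sq_sqrt (by positivity)
  have hbase : 1 + ((ystar - μ) / (m * σ)) ^ 2 / (ν - 2) = 1 + (ystar - μ)^2 / k := by
    rw [div_pow, mul_pow, hm2, hk]
    field_simp
  rw [tpdf]
  have he : (ν - 2 + 1) / 2 = (ν - 1) / 2 := by ring
  rw [he, hbase]
  simp only [hF, hp]
  have hG1 : Real.Gamma ((ν + 1) / 2) = (ν - 1) / 2 * Real.Gamma ((ν - 1) / 2) := by
    have h := Real.Gamma_add_one (show ((ν - 1) / 2 : ℝ) ≠ 0 by positivity)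
    rw [show (ν - 1) / 2 + 1 = (ν + 1) / 2 by ring] at h
    exact h
  have hG2 : Real.Gamma (ν / 2) = (ν - 2) / 2 * Real.Gamma ((ν - 2) / 2) := by
    have h := Real.Gamma_add_one (show ((ν - 2) / 2 : ℝ) ≠ 0 by positivity)
    rw [show (ν - 2) / 2 + 1 = ν / 2 by ring] at h
    exact h
  have hs1 : Real.sqrt (ν * Real.pi) = Real.sqrt ν * Real.sqrt Real.pi :=
    Real.sqrt_mul hν0.le _
  have hs2 : Real.sqrt ((ν - 2) * Real.pi) = Real.sqrt (ν - 2) * Real.sqrt Real.pi :=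
    Real.sqrt_mul hd0.le _
  have hmm : m = Real.sqrt ν / Real.sqrt (ν - 2) := by
    rw [hm, Real.sqrt_div hν0.le]
  have hconst : c * k / (ν - 1) =
      m * σ * (Real.Gamma ((ν - 1) / 2) /
        (Real.sqrt ((ν - 2) * Real.pi) * Real.Gamma ((ν - 2) / 2))) := by
    rw [hc, hk, hG1, hG2, hs1, hs2, hmm]
    exact student_aux (Real.sqrt ν) (Real.sqrt (ν - 2)) (Real.sqrt Real.pi) σ
      (Real.Gamma ((ν - 1) / 2)) (Real.Gamma ((ν - 2) / 2)) ν
      (Real.sq_sqrt hν0.le) (Real.sq_sqrt hd0.le) (Real.sqrt_pos.mpr hν0)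
      (Real.sqrt_pos.mpr hd0) (Real.sqrt_pos.mpr Real.pi_pos) hσ
      (Real.Gamma_pos_of_pos (by positivity))
      (Real.Gamma_pos_of_pos (by positivity)) h10
  rw [hconst]
  ring
end

section
/- For every real ν>0, the standard Student-t density evaluated at zero satisfies φ_ν(0) = Γ((ν+1)/2)/(√(νπ)·Γ(ν/2)) ≤ 2/5. Equivalently, Γ((ν+1)/2) ≤ (2/5)·√(νπ)·Γ(ν/2) for all ν>0. -/
lemma wendel (x : ℝ) (hx : 0 < x) :
    Real.Gamma (x + 1/2) ≤ Real.sqrt x * Real.Gamma x := by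
  have h := Real.Gamma_mul_add_mul_le_rpow_Gamma_mul_rpow_Gamma (s := x) (t := x + 1)
    (a := 1/2) (b := 1/2) hx (by linarith) (by norm_num) (by norm_num) (by norm_num)
  have hxG : 0 < Real.Gamma x := Real.Gamma_pos_of_pos hx
  have h1 : (1/2 : ℝ) * x + 1/2 * (x + 1) = x + 1/2 := by ring
  rw [h1, Real.Gamma_add_one (ne_of_gt hx)] at h
  calc Real.Gamma (x + 1/2) ≤ Real.Gamma x ^ (1/2 : ℝ) * (x * Real.Gamma x) ^ (1/2 : ℝ) := h
    _ = Real.sqrt x * Real.Gamma x := by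
        rw [Real.mul_rpow hx.le hxG.le, Real.sqrt_eq_rpow, mul_left_comm,
          ← Real.rpow_add hxG]
        norm_num

/-- For every `ν > 0`, the standard Student-t density at zero
satisfies `φ_ν(0) = Γ((ν+1)/2)/(√(νπ)Γ(ν/2)) ≤ 2/5`; equivalently,
`Γ((ν+1)/2) ≤ (2/5)√(νπ)Γ(ν/2)`. -/
theorem tpdf_zero_le (ν : ℝ) (hν : 0 < ν) :
    tpdf ν 0 = Real.Gamma ((ν + 1) / 2) /
      (Real.sqrt (ν * Real.pi) * Real.Gamma (ν / 2)) ∧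
    tpdf ν 0 ≤ 2 / 5 ∧
    Real.Gamma ((ν + 1) / 2) ≤
      2 / 5 * (Real.sqrt (ν * Real.pi) * Real.Gamma (ν / 2)) := by
  have hG : 0 < Real.Gamma (ν / 2) := Real.Gamma_pos_of_pos (by linarith)
  have hs : 0 < Real.sqrt (ν * Real.pi) := Real.sqrt_pos.mpr (by positivity)
  have hkey : Real.Gamma ((ν + 1) / 2) ≤
      2 / 5 * (Real.sqrt (ν * Real.pi) * Real.Gamma (ν / 2)) := by
    have hw := wendel (ν / 2) (by linarith)
    have h1 : (ν / 2 + 1 / 2 : ℝ) = (ν + 1) / 2 := by ring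
    rw [h1] at hw
    refine hw.trans ?_
    have hsq : Real.sqrt (ν / 2) ≤ 2 / 5 * Real.sqrt (ν * Real.pi) := by
      have h2 : (2 / 5 : ℝ) * Real.sqrt (ν * Real.pi)
          = Real.sqrt (4 / 25 * (ν * Real.pi)) := by
        rw [Real.sqrt_mul (by norm_num : (0:ℝ) ≤ 4/25),
          show (4/25 : ℝ) = (2/5)^2 by norm_num, Real.sqrt_sq (by norm_num)]
      rw [h2]
      apply Real.sqrt_le_sqrt
      nlinarith [Real.pi_gt_d6]
    nlinarith
  have heq : tpdf ν 0 = Real.Gamma ((ν + 1) / 2) /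
      (Real.sqrt (ν * Real.pi) * Real.Gamma (ν / 2)) := by
    simp [tpdf, Real.one_rpow]
  refine ⟨heq, ?_, hkey⟩
  rw [heq, div_le_iff₀ (by positivity)]
  linarith [hkey]
end

section
/- Let ν>2 and define τ_ν(x) = x·Φ_ν(x) + √(ν/(ν−2))·φ_{ν−2}(x/√(ν/(ν−2))), where φ_ν is the standard Student-t density with ν degrees of freedom and Φ_ν its cumulative distribution function. Then for all real numbers u ≥ 0, s > 0, σ̃ > 0 and S ≥ 0: σ̃·s·τ_ν((u − S·s)/(σ̃·s)) ≥ (σ̃·τ_ν(−S/σ̃)/(S + σ̃·τ_ν(−S/σ̃)))·u ≥ (τ_ν(−S/σ̃)/τ_ν(S/σ̃))·u. -/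
open MeasureTheory

/-- `τ_ν(x) = x·Φ_ν(x) + √(ν/(ν−2))·φ_{ν−2}(x/√(ν/(ν−2)))`. -/
noncomputable def tau (ν x : ℝ) : ℝ :=
  x * tcdf ν x +
    Real.sqrt (ν / (ν - 2)) * tpdf (ν - 2) (x / Real.sqrt (ν / (ν - 2)))

namespace HEIAux

open Real Set Filter

lemma tpdf_nonneg {ν : ℝ} (hν : 0 < ν) (x : ℝ) : 0 ≤ tpdf ν x := by
  have h1 : 0 < Real.Gamma ((ν + 1) / 2) := Real.Gamma_pos_of_pos (by linarith)
  have h2 : 0 < Real.Gamma (ν / 2) := Real.Gamma_pos_of_pos (by linarith)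
  have h3 : 0 < Real.sqrt (ν * Real.pi) := Real.sqrt_pos.2 (by positivity)
  have h4 : (0:ℝ) < 1 + x ^ 2 / ν := by positivity
  exact mul_nonneg (div_nonneg h1.le (mul_nonneg h3.le h2.le)) (Real.rpow_nonneg h4.le _)

lemma tpdf_even (ν x : ℝ) : tpdf ν (-x) = tpdf ν x := by
  simp [tpdf, neg_pow]

lemma continuous_tpdf {ν : ℝ} (hν : 0 < ν) : Continuous (tpdf ν) := by
  apply Continuous.mul continuous_const
  apply Continuous.rpow_const (by continuity)
  intro x
  left
  have : (0:ℝ) < 1 + x ^ 2 / ν := by positivity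
  exact ne_of_gt this

lemma tpdf_le {ν : ℝ} (hν : 0 < ν) (x : ℝ) :
    tpdf ν x ≤ (Real.Gamma ((ν + 1) / 2) / (Real.sqrt (ν * Real.pi) * Real.Gamma (ν / 2)))
      * (2 * max 1 ν) ^ ((ν + 1) / 2) * (1 + ‖x‖) ^ (-(ν + 1)) := by
  have h1 : 0 < Real.Gamma ((ν + 1) / 2) := Real.Gamma_pos_of_pos (by linarith)
  have h2 : 0 < Real.Gamma (ν / 2) := Real.Gamma_pos_of_pos (by linarith)
  have h3 : 0 < Real.sqrt (ν * Real.pi) := Real.sqrt_pos.2 (by positivity)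
  have hK : 0 ≤ Real.Gamma ((ν + 1) / 2) / (Real.sqrt (ν * Real.pi) * Real.Gamma (ν / 2)) := by
    positivity
  have hM : (0:ℝ) < 2 * max 1 ν := by positivity
  have hx : (0:ℝ) < 1 + ‖x‖ := by positivity
  have hbase : (1 + ‖x‖) ^ (2:ℝ) / (2 * max 1 ν) ≤ 1 + x ^ 2 / ν := by
    rw [div_le_iff₀ hM]
    rw [show ((2:ℝ)) = ((2:ℕ):ℝ) by norm_num, Real.rpow_natCast]
    have hxx : ‖x‖ ^ 2 = x ^ 2 := by rw [Real.norm_eq_abs, sq_abs]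
    have h2x : 2 * ‖x‖ ≤ 1 + ‖x‖ ^ 2 := by nlinarith [sq_nonneg (1 - ‖x‖)]
    have hmax1 : (1:ℝ) ≤ max 1 ν := le_max_left _ _
    have hmaxν : ν ≤ max 1 ν := le_max_right _ _
    have hxν : x ^ 2 ≤ max 1 ν * (x ^ 2 / ν) := by
      rw [mul_div_assoc']
      rw [le_div_iff₀ hν]
      nlinarith [sq_nonneg x]
    have hx2 : (0:ℝ) ≤ x ^ 2 / ν := by positivity
    nlinarith [sq_nonneg x]
  have hb0 : (0:ℝ) < (1 + ‖x‖) ^ (2:ℝ) / (2 * max 1 ν) := by positivity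
  have key : (1 + x ^ 2 / ν) ^ (-((ν + 1) / 2)) ≤
      ((1 + ‖x‖) ^ (2:ℝ) / (2 * max 1 ν)) ^ (-((ν + 1) / 2)) :=
    Real.rpow_le_rpow_of_nonpos hb0 hbase (by linarith)
  have hrw : ((1 + ‖x‖) ^ (2:ℝ) / (2 * max 1 ν)) ^ (-((ν + 1) / 2)) =
      (2 * max 1 ν) ^ ((ν + 1) / 2) * (1 + ‖x‖) ^ (-(ν + 1)) := by
    rw [Real.div_rpow (Real.rpow_nonneg hx.le _) hM.le, ← Real.rpow_mul hx.le,
      (by ring : (2:ℝ) * (-((ν + 1) / 2)) = -(ν + 1)), Real.rpow_neg hM.le, div_eq_mul_inv, inv_inv,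
      mul_comm]
  calc tpdf ν x ≤ Real.Gamma ((ν + 1) / 2) / (Real.sqrt (ν * Real.pi) * Real.Gamma (ν / 2)) *
        ((2 * max 1 ν) ^ ((ν + 1) / 2) * (1 + ‖x‖) ^ (-(ν + 1))) := by
        unfold tpdf
        exact mul_le_mul_of_nonneg_left (key.trans_eq hrw) hK
    _ = _ := by ring

lemma integrable_tpdf {ν : ℝ} (hν : 0 < ν) : Integrable (tpdf ν) := by
  have hbig : Integrable (fun x : ℝ => (1 + ‖x‖) ^ (-(ν + 1))) :=
    integrable_one_add_norm (by simp; linarith)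
  set C := Real.Gamma ((ν + 1) / 2) / (Real.sqrt (ν * Real.pi) * Real.Gamma (ν / 2)) *
    (2 * max 1 ν) ^ ((ν + 1) / 2) with hC
  have hC0 : 0 ≤ C := by
    have h1 : 0 < Real.Gamma ((ν + 1) / 2) := Real.Gamma_pos_of_pos (by linarith)
    have h2 : 0 < Real.Gamma (ν / 2) := Real.Gamma_pos_of_pos (by linarith)
    have h3 : 0 < Real.sqrt (ν * Real.pi) := Real.sqrt_pos.2 (by positivity)
    positivity
  refine (hbig.const_mul C).mono ((continuous_tpdf hν).aestronglyMeasurable)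
    (Filter.Eventually.of_forall fun x => ?_)
  rw [Real.norm_eq_abs, abs_of_nonneg (tpdf_nonneg hν x), Real.norm_eq_abs]
  have := tpdf_le hν x
  calc tpdf ν x ≤ C * (1 + ‖x‖) ^ (-(ν + 1)) := by rw [hC]; exact this
    _ ≤ |C * (1 + ‖x‖) ^ (-(ν + 1))| := le_abs_self _

lemma integrable_mul_tpdf {ν : ℝ} (hν : 1 < ν) : Integrable (fun t => t * tpdf ν t) := by
  have hν0 : 0 < ν := by linarith
  have hbig : Integrable (fun x : ℝ => (1 + ‖x‖) ^ (-ν)) :=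
    integrable_one_add_norm (by simp; linarith)
  set C := Real.Gamma ((ν + 1) / 2) / (Real.sqrt (ν * Real.pi) * Real.Gamma (ν / 2)) *
    (2 * max 1 ν) ^ ((ν + 1) / 2) with hC
  have hC0 : 0 ≤ C := by
    have h1 : 0 < Real.Gamma ((ν + 1) / 2) := Real.Gamma_pos_of_pos (by linarith)
    have h2 : 0 < Real.Gamma (ν / 2) := Real.Gamma_pos_of_pos (by linarith)
    have h3 : 0 < Real.sqrt (ν * Real.pi) := Real.sqrt_pos.2 (by positivity)
    positivity
  have hmeas : AEStronglyMeasurable (fun t : ℝ => t * tpdf ν t) volume :=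
    (continuous_id.mul (continuous_tpdf hν0)).aestronglyMeasurable
  refine (hbig.const_mul C).mono hmeas (Filter.Eventually.of_forall fun x => ?_)
  have hx : (0:ℝ) < 1 + ‖x‖ := by positivity
  rw [Real.norm_eq_abs, Real.norm_eq_abs, abs_mul, abs_of_nonneg (tpdf_nonneg hν0 x)]
  have h1 : |x| * tpdf ν x ≤ (1 + ‖x‖) * (C * (1 + ‖x‖) ^ (-(ν + 1))) := by
    have ht : tpdf ν x ≤ C * (1 + ‖x‖) ^ (-(ν + 1)) := by
      rw [hC]; exact tpdf_le hν0 x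
    have hxn : |x| ≤ 1 + ‖x‖ := by rw [Real.norm_eq_abs]; linarith
    exact mul_le_mul hxn ht (tpdf_nonneg hν0 x) hx.le
  have h2 : (1 + ‖x‖) * (C * (1 + ‖x‖) ^ (-(ν + 1))) = C * (1 + ‖x‖) ^ (-ν) := by
    have e : (1 + ‖x‖) ^ (-ν) = (1 + ‖x‖) ^ (-(ν + 1)) * (1 + ‖x‖) := by
      rw [← Real.rpow_add_one hx.ne' (-(ν + 1))]
      norm_num
    rw [e]; ring
  calc |x| * tpdf ν x ≤ C * (1 + ‖x‖) ^ (-ν) := by rw [← h2]; exact h1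
    _ ≤ |C * (1 + ‖x‖) ^ (-ν)| := le_abs_self _

lemma gamma_scaled {A b : ℝ} (hA : 0 < A) (hb : 0 < b) :
    ∫ y in Set.Ioi (0:ℝ), y ^ (A - 1) * Real.exp (-(b * y)) = b ^ (-A) * Real.Gamma A := by
  have h := integral_rpow_mul_exp_neg_mul_rpow (p := 1) (q := A - 1) (b := b) one_pos
    (by linarith) hb
  simp only [Real.rpow_one] at h
  have e1 : -(A - 1 + 1) / 1 = -A := by ring
  have e2 : (A - 1 + 1) / 1 = A := by ring
  rw [e1, e2] at h
  norm_num at h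
  rw [← h]

lemma integral_rpow_neg_one_add_sq {ν : ℝ} (hν : 0 < ν) :
    ∫ x : ℝ, (1 + x ^ 2 / ν) ^ (-((ν + 1) / 2)) =
      Real.sqrt (Real.pi * ν) * Real.Gamma (ν / 2) / Real.Gamma ((ν + 1) / 2) := by
  have hA : (0:ℝ) < (ν + 1) / 2 := by linarith
  have hA2 : (0:ℝ) < (ν + 1) / 2 - 1 / 2 := by linarith
  have hΓA : 0 < Real.Gamma ((ν + 1) / 2) := Real.Gamma_pos_of_pos hA
  set F : ℝ → ℝ → ℝ := fun y x =>
    y ^ ((ν + 1) / 2 - 1) * Real.exp (-y) * Real.exp (-(y / ν) * x ^ 2) with hF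
  -- pointwise identity in x
  have hpt : ∀ x : ℝ, (1 + x ^ 2 / ν) ^ (-((ν + 1) / 2)) =
      (∫ y in Set.Ioi (0:ℝ), F y x) / Real.Gamma ((ν + 1) / 2) := by
    intro x
    have hb : (0:ℝ) < 1 + x ^ 2 / ν := by positivity
    have h1 : ∫ y in Set.Ioi (0:ℝ), F y x =
        ∫ y in Set.Ioi (0:ℝ), y ^ ((ν + 1) / 2 - 1) * Real.exp (-((1 + x ^ 2 / ν) * y)) := by
      refine setIntegral_congr_fun measurableSet_Ioi (fun y _ => ?_)
      rw [hF]
      simp only []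
      rw [mul_assoc, ← Real.exp_add]
      congr 2
      field_simp
      ring
    rw [h1, gamma_scaled hA hb]
    field_simp
  -- gaussian slice integral
  have hgauss : ∀ y ∈ Set.Ioi (0:ℝ), ∫ x : ℝ, F y x =
      Real.sqrt (Real.pi * ν) * (Real.exp (-y) * y ^ ((ν + 1) / 2 - 1 / 2 - 1)) := by
    intro y hy
    rw [Set.mem_Ioi] at hy
    have hyν : 0 < y / ν := div_pos hy hν
    have h1 : ∫ x : ℝ, F y x =
        y ^ ((ν + 1) / 2 - 1) * Real.exp (-y) * ∫ x : ℝ, Real.exp (-(y / ν) * x ^ 2) := by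
      rw [hF]
      exact integral_const_mul _ _
    rw [h1, integral_gaussian]
    have h2 : Real.sqrt (Real.pi / (y / ν)) = Real.sqrt (Real.pi * ν) / Real.sqrt y := by
      rw [← Real.sqrt_div (by positivity)]
      congr 1
      field_simp
    rw [h2]
    have h3 : Real.sqrt y = y ^ (1/2 : ℝ) := Real.sqrt_eq_rpow y
    rw [h3]
    have h4 : y ^ ((ν + 1) / 2 - 1) / y ^ ((1:ℝ)/2) = y ^ ((ν + 1) / 2 - 1/2 - 1) := by
      rw [← Real.rpow_sub hy]
      congr 1
      ring
    calc y ^ ((ν + 1) / 2 - 1) * Real.exp (-y) * (Real.sqrt (Real.pi * ν) / y ^ ((1:ℝ)/2))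
        = Real.sqrt (Real.pi * ν) *
            (Real.exp (-y) * (y ^ ((ν + 1) / 2 - 1) / y ^ ((1:ℝ)/2))) := by ring
      _ = _ := by rw [h4]
  -- measurability
  have hmeas : AEStronglyMeasurable (fun p : ℝ × ℝ => F p.1 p.2)
      ((volume.restrict (Set.Ioi 0)).prod volume) := by
    apply Measurable.aestronglyMeasurable
    fun_prop
  -- integrability on the product
  have hInt : Integrable (fun p : ℝ × ℝ => F p.1 p.2)
      ((volume.restrict (Set.Ioi 0)).prod volume) := by
    rw [integrable_prod_iff hmeas]
    constructor
    · filter_upwards [ae_restrict_mem measurableSet_Ioi] with y hy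
      rw [Set.mem_Ioi] at hy
      exact (integrable_exp_neg_mul_sq (div_pos hy hν)).const_mul _
    · have hcongr : (fun y => ∫ x : ℝ, ‖F y x‖) =ᶠ[ae (volume.restrict (Set.Ioi (0:ℝ)))]
          (fun y => Real.sqrt (Real.pi * ν) *
            (Real.exp (-y) * y ^ ((ν + 1) / 2 - 1 / 2 - 1))) := by
        filter_upwards [ae_restrict_mem measurableSet_Ioi] with y hy
        have hy' : (0:ℝ) < y := hy
        have hnn : ∀ x : ℝ, 0 ≤ F y x := by
          intro x
          rw [hF]
          have := Real.rpow_pos_of_pos hy' ((ν + 1) / 2 - 1)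
          positivity
        show (∫ x : ℝ, ‖F y x‖) = _
        rw [show (fun x => ‖F y x‖) = fun x => F y x from funext fun x => norm_of_nonneg (hnn x)]
        exact hgauss y hy
      have hgood : Integrable (fun y : ℝ => Real.sqrt (Real.pi * ν) *
          (Real.exp (-y) * y ^ ((ν + 1) / 2 - 1 / 2 - 1))) (volume.restrict (Set.Ioi 0)) :=
        (Real.GammaIntegral_convergent hA2).const_mul _
      exact hgood.congr hcongr.symm
  -- swap and conclude
  have hswap := integral_integral_swap (f := F) (μ := volume.restrict (Set.Ioi 0)) (ν := volume)
    hInt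
  calc ∫ x : ℝ, (1 + x ^ 2 / ν) ^ (-((ν + 1) / 2))
      = ∫ x : ℝ, (∫ y in Set.Ioi (0:ℝ), F y x) / Real.Gamma ((ν + 1) / 2) := by
        exact integral_congr_ae (Filter.Eventually.of_forall fun x => hpt x)
    _ = (∫ x : ℝ, ∫ y in Set.Ioi (0:ℝ), F y x) / Real.Gamma ((ν + 1) / 2) := by
        rw [integral_div]
    _ = (∫ y in Set.Ioi (0:ℝ), ∫ x : ℝ, F y x) / Real.Gamma ((ν + 1) / 2) := by
        rw [← hswap]
    _ = (∫ y in Set.Ioi (0:ℝ), Real.sqrt (Real.pi * ν) *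
          (Real.exp (-y) * y ^ ((ν + 1) / 2 - 1 / 2 - 1))) / Real.Gamma ((ν + 1) / 2) := by
        congr 1
        exact setIntegral_congr_fun measurableSet_Ioi hgauss
    _ = Real.sqrt (Real.pi * ν) * Real.Gamma ((ν + 1) / 2 - 1 / 2) / Real.Gamma ((ν + 1) / 2) := by
        rw [integral_const_mul, Real.Gamma_eq_integral hA2]
    _ = Real.sqrt (Real.pi * ν) * Real.Gamma (ν / 2) / Real.Gamma ((ν + 1) / 2) := by
        rw [show (ν + 1) / 2 - 1 / 2 = ν / 2 by ring]

lemma integral_tpdf {ν : ℝ} (hν : 0 < ν) : ∫ x, tpdf ν x = 1 := by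
  have h1 : 0 < Real.Gamma ((ν + 1) / 2) := Real.Gamma_pos_of_pos (by linarith)
  have h2 : 0 < Real.Gamma (ν / 2) := Real.Gamma_pos_of_pos (by linarith)
  have h3 : 0 < Real.sqrt (ν * Real.pi) := Real.sqrt_pos.2 (by positivity)
  unfold tpdf
  rw [integral_const_mul, integral_rpow_neg_one_add_sq hν]
  rw [show Real.pi * ν = ν * Real.pi by ring]
  field_simp


lemma tcdf_add_neg {ν : ℝ} (hν : 0 < ν) (x : ℝ) : tcdf ν x + tcdf ν (-x) = 1 := by
  have hint := integrable_tpdf hν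
  have h1 : tcdf ν (-x) = ∫ t in Set.Ioi x, tpdf ν t := by
    unfold tcdf
    rw [show (∫ t in Set.Iic (-x), tpdf ν t) = ∫ t in Set.Iic (-x), tpdf ν (-t) from
      setIntegral_congr_fun measurableSet_Iic fun t _ => (tpdf_even ν t).symm,
      integral_comp_neg_Iic (-x) (tpdf ν), neg_neg]
  rw [h1]
  unfold tcdf
  rw [intervalIntegral.integral_Iic_add_Ioi hint.integrableOn hint.integrableOn,
    integral_tpdf hν]

/-- The constant in front of the pdf term of `tau`. -/
noncomputable def tauC (ν : ℝ) : ℝ :=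
  Real.sqrt (ν / (ν - 2)) *
    (Real.Gamma ((ν - 1) / 2) / (Real.sqrt ((ν - 2) * Real.pi) * Real.Gamma ((ν - 2) / 2)))

lemma sq_div_eq {ν : ℝ} (hν : 2 < ν) (x : ℝ) :
    (x / Real.sqrt (ν / (ν - 2))) ^ 2 / (ν - 2) = x ^ 2 / ν := by
  have h2 : (0:ℝ) < ν - 2 := by linarith
  have h0 : (0:ℝ) < ν := by linarith
  have hc : (0:ℝ) < ν / (ν - 2) := by positivity
  have hsq : Real.sqrt (ν / (ν - 2)) ^ 2 = ν / (ν - 2) := Real.sq_sqrt hc.le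
  rw [div_pow, hsq]
  field_simp

lemma g_eq {ν : ℝ} (hν : 2 < ν) (x : ℝ) :
    Real.sqrt (ν / (ν - 2)) * tpdf (ν - 2) (x / Real.sqrt (ν / (ν - 2))) =
      tauC ν * (1 + x ^ 2 / ν) ^ (-((ν - 1) / 2)) := by
  unfold tpdf tauC
  rw [sq_div_eq hν x, show ν - 2 + 1 = ν - 1 by ring]
  ring

lemma tauC_mul {ν : ℝ} (hν : 2 < ν) :
    tauC ν * ((ν - 1) / ν) =
      Real.Gamma ((ν + 1) / 2) / (Real.sqrt (ν * Real.pi) * Real.Gamma (ν / 2)) := by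
  have h2 : (0:ℝ) < ν - 2 := by linarith
  have h0 : (0:ℝ) < ν := by linarith
  have hG1 : Real.Gamma ((ν + 1) / 2) = (ν - 1) / 2 * Real.Gamma ((ν - 1) / 2) := by
    rw [show (ν + 1) / 2 = (ν - 1) / 2 + 1 by ring,
      Real.Gamma_add_one (ne_of_gt (by linarith : (0:ℝ) < (ν - 1) / 2))]
  have hG2 : Real.Gamma (ν / 2) = (ν - 2) / 2 * Real.Gamma ((ν - 2) / 2) := by
    rw [show ν / 2 = (ν - 2) / 2 + 1 by ring,
      Real.Gamma_add_one (ne_of_gt (by linarith : (0:ℝ) < (ν - 2) / 2))]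
  have hΓ2 : 0 < Real.Gamma ((ν - 2) / 2) := Real.Gamma_pos_of_pos (by linarith)
  have hsν : Real.sqrt ν * Real.sqrt ν = ν := Real.mul_self_sqrt h0.le
  have hs2 : Real.sqrt (ν - 2) * Real.sqrt (ν - 2) = ν - 2 := Real.mul_self_sqrt h2.le
  have hsνpos : 0 < Real.sqrt ν := Real.sqrt_pos.2 h0
  have hs2pos : 0 < Real.sqrt (ν - 2) := Real.sqrt_pos.2 h2
  have hsπpos : 0 < Real.sqrt Real.pi := Real.sqrt_pos.2 Real.pi_pos
  unfold tauC
  rw [Real.sqrt_div h0.le, Real.sqrt_mul h2.le, Real.sqrt_mul h0.le, hG1, hG2]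
  field_simp
  ring_nf
  rw [Real.sq_sqrt (by linarith : (0:ℝ) ≤ -2 + ν), Real.sq_sqrt h0.le]
  ring

lemma hasDerivAt_g {ν : ℝ} (hν : 2 < ν) (x : ℝ) :
    HasDerivAt (fun t => Real.sqrt (ν / (ν - 2)) * tpdf (ν - 2) (t / Real.sqrt (ν / (ν - 2))))
      (-(x * tpdf ν x)) x := by
  have h0 : (0:ℝ) < ν := by linarith
  have hfun : (fun t => Real.sqrt (ν / (ν - 2)) * tpdf (ν - 2) (t / Real.sqrt (ν / (ν - 2))))
      = fun t => tauC ν * (1 + t ^ 2 / ν) ^ (-((ν - 1) / 2)) :=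
    funext fun t => g_eq hν t
  rw [hfun]
  have hb : (0:ℝ) < 1 + x ^ 2 / ν := by positivity
  have hinner : HasDerivAt (fun t : ℝ => 1 + t ^ 2 / ν) (2 * x / ν) x := by
    have := ((hasDerivAt_pow 2 x).div_const ν).const_add (1:ℝ)
    simpa using this
  have hrpow := (hinner.rpow_const (p := -((ν - 1) / 2)) (Or.inl hb.ne')).const_mul (tauC ν)
  have e : tauC ν * (2 * x / ν * -((ν - 1) / 2) * (1 + x ^ 2 / ν) ^ (-((ν - 1) / 2) - 1))
      = -(x * tpdf ν x) := by
    unfold tpdf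
    rw [show -((ν - 1) / 2) - 1 = -((ν + 1) / 2) by ring]
    have hc := tauC_mul hν
    linear_combination (-(x) * (1 + x ^ 2 / ν) ^ (-((ν + 1) / 2))) * hc
  exact e ▸ hrpow


lemma tendsto_g_atBot {ν : ℝ} (hν : 2 < ν) :
    Filter.Tendsto (fun t => Real.sqrt (ν / (ν - 2)) * tpdf (ν - 2) (t / Real.sqrt (ν / (ν - 2))))
      Filter.atBot (nhds 0) := by
  have h0 : (0:ℝ) < ν := by linarith
  have hfun : (fun t => Real.sqrt (ν / (ν - 2)) * tpdf (ν - 2) (t / Real.sqrt (ν / (ν - 2))))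
      = fun t => tauC ν * (1 + t ^ 2 / ν) ^ (-((ν - 1) / 2)) := funext fun t => g_eq hν t
  rw [hfun]
  have hsq : Filter.Tendsto (fun t : ℝ => t ^ 2) Filter.atBot Filter.atTop := by
    have h1 : Filter.Tendsto (fun t : ℝ => (-t) ^ 2) Filter.atBot Filter.atTop :=
      (tendsto_pow_atTop two_ne_zero).comp tendsto_neg_atBot_atTop
    refine h1.congr fun t => by ring
  have hbase : Filter.Tendsto (fun t : ℝ => 1 + t ^ 2 / ν) Filter.atBot Filter.atTop := by
    apply Filter.tendsto_atTop_add_const_left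
    exact hsq.atTop_div_const h0
  have hr : Filter.Tendsto (fun s : ℝ => s ^ (-((ν - 1) / 2))) Filter.atTop (nhds 0) :=
    tendsto_rpow_neg_atTop (by linarith)
  have := (hr.comp hbase).const_mul (tauC ν)
  simpa using this

lemma integral_Iic_G {ν : ℝ} (hν : 2 < ν) (x : ℝ) :
    ∫ t in Set.Iic x, -(t * tpdf ν t) =
      Real.sqrt (ν / (ν - 2)) * tpdf (ν - 2) (x / Real.sqrt (ν / (ν - 2))) := by
  have h := MeasureTheory.integral_Iic_of_hasDerivAt_of_tendsto'
    (f := fun t => Real.sqrt (ν / (ν - 2)) * tpdf (ν - 2) (t / Real.sqrt (ν / (ν - 2))))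
    (f' := fun t => -(t * tpdf ν t)) (a := x) (m := 0)
    (fun t _ => hasDerivAt_g hν t)
    ((integrable_mul_tpdf (by linarith)).neg.integrableOn)
    (tendsto_g_atBot hν)
  rw [h, sub_zero]

lemma integrableOn_sub_mul_tpdf {ν : ℝ} (hν : 2 < ν) (c x : ℝ) :
    IntegrableOn (fun t => (c - t) * tpdf ν t) (Set.Iic x) := by
  have : (fun t => (c - t) * tpdf ν t) = fun t => c * tpdf ν t - t * tpdf ν t :=
    funext fun t => by ring
  rw [this]
  exact (((integrable_tpdf (by linarith)).const_mul c).sub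
    (integrable_mul_tpdf (by linarith))).integrableOn

lemma tau_eq_integral {ν : ℝ} (hν : 2 < ν) (x : ℝ) :
    tau ν x = ∫ t in Set.Iic x, (x - t) * tpdf ν t := by
  have h0 : (0:ℝ) < ν := by linarith
  have hint1 : IntegrableOn (fun t => x * tpdf ν t) (Set.Iic x) :=
    ((integrable_tpdf h0).const_mul x).integrableOn
  have hint2 : IntegrableOn (fun t => -(t * tpdf ν t)) (Set.Iic x) :=
    (integrable_mul_tpdf (by linarith)).neg.integrableOn
  unfold tau tcdf
  rw [← integral_const_mul, ← integral_Iic_G hν x, ← integral_add hint1 hint2]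
  exact setIntegral_congr_fun measurableSet_Iic fun t _ => by ring

lemma tau_nonneg {ν : ℝ} (hν : 2 < ν) (x : ℝ) : 0 ≤ tau ν x := by
  rw [tau_eq_integral hν x]
  refine setIntegral_nonneg measurableSet_Iic fun t ht => ?_
  exact mul_nonneg (by linarith [Set.mem_Iic.1 ht]) (tpdf_nonneg (by linarith) t)

lemma tau_mono {ν : ℝ} (hν : 2 < ν) : Monotone (tau ν) := by
  intro x y hxy
  rw [tau_eq_integral hν x, tau_eq_integral hν y]
  calc ∫ t in Set.Iic x, (x - t) * tpdf ν t
      ≤ ∫ t in Set.Iic x, (y - t) * tpdf ν t := by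
        refine setIntegral_mono_on (integrableOn_sub_mul_tpdf hν x x)
          (integrableOn_sub_mul_tpdf hν y x) measurableSet_Iic fun t _ => ?_
        exact mul_le_mul_of_nonneg_right (by linarith) (tpdf_nonneg (by linarith) t)
    _ ≤ ∫ t in Set.Iic y, (y - t) * tpdf ν t := by
        refine setIntegral_mono_set (integrableOn_sub_mul_tpdf hν y y) ?_
          ((Set.Iic_subset_Iic.2 hxy).eventuallyLE)
        filter_upwards [ae_restrict_mem measurableSet_Iic] with t ht
        exact mul_nonneg (by linarith [Set.mem_Iic.1 ht]) (tpdf_nonneg (by linarith) t)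

lemma tau_add {ν : ℝ} (hν : 2 < ν) (x : ℝ) : tau ν x = x + tau ν (-x) := by
  have hg : Real.sqrt (ν / (ν - 2)) * tpdf (ν - 2) (-x / Real.sqrt (ν / (ν - 2)))
      = Real.sqrt (ν / (ν - 2)) * tpdf (ν - 2) (x / Real.sqrt (ν / (ν - 2))) := by
    rw [neg_div, tpdf_even]
  have hc := tcdf_add_neg (by linarith : (0:ℝ) < ν) x
  unfold tau
  rw [hg]
  linear_combination x * hc

end HEIAux

/-- HEI lower bound: for `ν > 2` and all `u ≥ 0`, `s > 0`,
`σ̃ > 0`, `S ≥ 0`,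
`σ̃·s·τ_ν((u − S·s)/(σ̃·s)) ≥ (σ̃·τ_ν(−S/σ̃)/(S + σ̃·τ_ν(−S/σ̃)))·u
  ≥ (τ_ν(−S/σ̃)/τ_ν(S/σ̃))·u`. -/
theorem hei_lower_bound (ν : ℝ) (hν : 2 < ν)
    (u s σt S : ℝ) (hu : 0 ≤ u) (hs : 0 < s) (hσt : 0 < σt) (hS : 0 ≤ S) :
    σt * tau ν (-S / σt) / (S + σt * tau ν (-S / σt)) * u ≤
      σt * s * tau ν ((u - S * s) / (σt * s)) ∧
    tau ν (-S / σt) / tau ν (S / σt) * u ≤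
      σt * tau ν (-S / σt) / (S + σt * tau ν (-S / σt)) * u := by
  have hP : 0 ≤ tau ν (-S / σt) := HEIAux.tau_nonneg hν _
  constructor
  · -- first inequality
    rcases eq_or_lt_of_le hP with h0 | hPpos
    · rw [← h0]
      simp only [mul_zero, zero_div, zero_mul]
      exact mul_nonneg (mul_nonneg hσt.le hs.le) (HEIAux.tau_nonneg hν _)
    · set P := tau ν (-S / σt) with hPdef
      have hD : 0 < S + σt * P := by positivity
      have harg : -S / σt ≤ (u - S * s) / (σt * s) := by
        rw [div_le_div_iff₀ hσt (by positivity)]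
        nlinarith
      have hz1 : P ≤ tau ν ((u - S * s) / (σt * s)) := HEIAux.tau_mono hν harg
      have hz2 : (u - S * s) / (σt * s) ≤ tau ν ((u - S * s) / (σt * s)) := by
        have h := HEIAux.tau_add hν ((u - S * s) / (σt * s))
        have h2 := HEIAux.tau_nonneg hν (-((u - S * s) / (σt * s)))
        linarith
      by_cases hu2 : u ≤ s * (S + σt * P)
      · calc σt * P / (S + σt * P) * u ≤ σt * P / (S + σt * P) * (s * (S + σt * P)) :=
              mul_le_mul_of_nonneg_left hu2 (by positivity)
          _ = σt * s * P := by field_simp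
          _ ≤ σt * s * tau ν ((u - S * s) / (σt * s)) :=
              mul_le_mul_of_nonneg_left hz1 (by positivity)
      · push_neg at hu2
        have h1 : σt * s * ((u - S * s) / (σt * s)) = u - S * s := by
          field_simp
        calc σt * P / (S + σt * P) * u ≤ u - S * s := by
              rw [div_mul_eq_mul_div, div_le_iff₀ hD]
              nlinarith [mul_nonneg hS (le_of_lt (sub_pos.2 hu2))]
          _ = σt * s * ((u - S * s) / (σt * s)) := h1.symm
          _ ≤ σt * s * tau ν ((u - S * s) / (σt * s)) :=
              mul_le_mul_of_nonneg_left hz2 (by positivity)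
  · -- second inequality (in fact an equality)
    have hta : tau ν (S / σt) = S / σt + tau ν (-S / σt) := by
      rw [neg_div]
      exact HEIAux.tau_add hν _
    have hkey : tau ν (-S / σt) / tau ν (S / σt)
        = σt * tau ν (-S / σt) / (S + σt * tau ν (-S / σt)) := by
      rw [hta, show S / σt + tau ν (-S / σt) = (S + σt * tau ν (-S / σt)) / σt by
        field_simp, div_div_eq_mul_div]
      ring
    rw [hkey]
end

section
/- Let ν>1 and let φ_ν and Φ_ν denote the standard Student-t density with ν degrees of freedom and its cumulative distribution function. Then the Student expected improvement factor satisfies, as x → −∞, x·Φ_ν(x) + ((ν + x²)/(ν − 1))·φ_ν(x) = Θ(|x|^{1−ν}); that is, there exist constants 0 < c ≤ C and X > 0 such that for all x ≤ −X, c·|x|^{1−ν} ≤ x·Φ_ν(x) + ((ν + x²)/(ν − 1))·φ_ν(x) ≤ C·|x|^{1−ν}. -/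
open MeasureTheory

set_option maxHeartbeats 1000000 in
/-- For `ν > 1`, the Student expected improvement factor
`x·Φ_ν(x) + ((ν + x²)/(ν − 1))·φ_ν(x)` is `Θ(|x|^{1−ν})` as `x → −∞`:
there exist `0 < c ≤ C` and `X > 0` such that for all `x ≤ −X`,
`c·|x|^{1−ν} ≤ x·Φ_ν(x) + ((ν + x²)/(ν−1))·φ_ν(x) ≤ C·|x|^{1−ν}`. -/
theorem sei_factor_polynomial_tail (ν : ℝ) (hν : 1 < ν) :
    ∃ c C X : ℝ, 0 < c ∧ c ≤ C ∧ 0 < X ∧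
      ∀ x : ℝ, x ≤ -X →
        c * |x| ^ (1 - ν) ≤
            x * tcdf ν x + (ν + x ^ 2) / (ν - 1) * tpdf ν x ∧
        x * tcdf ν x + (ν + x ^ 2) / (ν - 1) * tpdf ν x ≤
            C * |x| ^ (1 - ν) := by
  have hν0 : (0:ℝ) < ν := by linarith
  set p : ℝ := (ν + 1) / 2 with hp
  have hp0 : 0 < p := by rw [hp]; linarith
  set K : ℝ := Real.Gamma ((ν + 1) / 2) / (Real.sqrt (ν * Real.pi) * Real.Gamma (ν / 2))
    with hKdef
  have hK : 0 < K := by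
    apply div_pos (Real.Gamma_pos_of_pos (by linarith))
    exact mul_pos (Real.sqrt_pos.mpr (mul_pos hν0 Real.pi_pos))
      (Real.Gamma_pos_of_pos (by linarith))
  set A : ℝ := K * ν ^ p with hAdef
  have hA : 0 < A := mul_pos hK (Real.rpow_pos_of_pos hν0 p)
  -- key algebraic identity
  have hEq : ∀ t : ℝ, t < 0 → (t ^ 2 / ν) ^ (-p) = ν ^ p * (-t) ^ (-(ν + 1)) := by
    intro t ht
    have hmt : (0:ℝ) < -t := by linarith
    have h2 : t ^ 2 = (-t) ^ (2:ℕ) := by ring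
    rw [h2, Real.div_rpow (by positivity) hν0.le, ← Real.rpow_natCast (-t) 2,
      ← Real.rpow_mul hmt.le]
    have h3 : ((2:ℕ):ℝ) * (-p) = -(ν + 1) := by push_cast; rw [hp]; ring
    rw [h3, Real.rpow_neg hν0.le, div_eq_mul_inv, inv_inv, mul_comm]
  -- pointwise nonnegativity
  have hpdf_nonneg : ∀ t : ℝ, 0 ≤ tpdf ν t := by
    intro t
    unfold tpdf
    have hb : (0:ℝ) < 1 + t ^ 2 / ν := by positivity
    exact mul_nonneg hK.le (Real.rpow_nonneg hb.le _)
  -- pointwise upper bound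
  have hpdf_le : ∀ t : ℝ, t < 0 → tpdf ν t ≤ A * (-t) ^ (-(ν + 1)) := by
    intro t ht
    have hmt : (0:ℝ) < -t := by linarith
    have hb : (0:ℝ) < t ^ 2 / ν := div_pos (by nlinarith) hν0
    have h1 : (1 + t ^ 2 / ν) ^ (-p) ≤ (t ^ 2 / ν) ^ (-p) :=
      Real.rpow_le_rpow_of_nonpos hb (by linarith) (by linarith)
    have : tpdf ν t ≤ K * (t ^ 2 / ν) ^ (-p) := by
      unfold tpdf
      exact mul_le_mul_of_nonneg_left h1 hK.le
    calc tpdf ν t ≤ K * (t ^ 2 / ν) ^ (-p) := this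
      _ = A * (-t) ^ (-(ν + 1)) := by rw [hEq t ht, hAdef]; ring
  -- the dominating function is integrable and its integral is known
  have hemb : MeasurableEmbedding (fun t : ℝ => -t) :=
    (Homeomorph.neg ℝ).isClosedEmbedding.measurableEmbedding
  have hexp : -(ν + 1) < -1 := by linarith
  -- cdf upper bound
  have hcdf_le : ∀ x : ℝ, x < 0 → tcdf ν x ≤ A * (-x) ^ (-ν) / ν := by
    intro x hx
    have hmx : (0:ℝ) < -x := by linarith
    have hint0 : IntegrableOn (fun t : ℝ => t ^ (-(ν + 1))) (Set.Ioi (-x)) :=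
      integrableOn_Ioi_rpow_of_lt hexp hmx
    have hpre : (fun t : ℝ => -t) ⁻¹' (Set.Ioi (-x)) = Set.Iio x := by
      ext t; simp
    have hmap : Measure.map (fun t : ℝ => -t) (volume.restrict (Set.Iio x)) =
        volume.restrict (Set.Ioi (-x)) := by
      rw [← hpre, ← Measure.restrict_map hemb.measurable measurableSet_Ioi,
        Measure.map_neg_eq_self (volume : Measure ℝ)]
    have hint0' : Integrable (fun t : ℝ => t ^ (-(ν + 1)))
        (Measure.map (fun t : ℝ => -t) (volume.restrict (Set.Iio x))) := by
      rw [hmap]; exact hint0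
    have hint1 : IntegrableOn (fun t : ℝ => (-t) ^ (-(ν + 1))) (Set.Iio x) :=
      Integrable.comp_measurable hint0' measurable_neg
    have hint2 : IntegrableOn (fun t : ℝ => (-t) ^ (-(ν + 1))) (Set.Iic x) := by
      rwa [IntegrableOn, ← restrict_Iio_eq_restrict_Iic]
    have hmono : tcdf ν x ≤ ∫ t in Set.Iic x, A * (-t) ^ (-(ν + 1)) := by
      unfold tcdf
      apply integral_mono_of_nonneg
      · filter_upwards with t; exact hpdf_nonneg t
      · exact hint2.const_mul A
      · filter_upwards [ae_restrict_mem measurableSet_Iic] with t ht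
        exact hpdf_le t (lt_of_le_of_lt ht hx)
    have hval : ∫ t in Set.Iic x, (-t) ^ (-(ν + 1)) = (-x) ^ (-ν) / ν := by
      rw [integral_comp_neg_Iic x (fun t => t ^ (-(ν + 1))),
        integral_Ioi_rpow_of_lt hexp hmx]
      have : -(ν + 1) + 1 = -ν := by ring
      rw [this]; field_simp
    calc tcdf ν x ≤ ∫ t in Set.Iic x, A * (-t) ^ (-(ν + 1)) := hmono
      _ = A * ((-x) ^ (-ν) / ν) := by rw [integral_const_mul, hval]
      _ = A * (-x) ^ (-ν) / ν := by ring
  have hcdf_nonneg : ∀ x : ℝ, 0 ≤ tcdf ν x :=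
    fun x => setIntegral_nonneg measurableSet_Iic (fun t _ => hpdf_nonneg t)
  -- the constants
  set θ : ℝ := 1 - 1 / (2 * ν) with hθdef
  have hθ0 : 0 < θ := by
    rw [hθdef]
    have : 1 / (2 * ν) < 1 := by
      rw [div_lt_one (by linarith)]; linarith
    linarith
  have hθ1 : θ < 1 := by
    rw [hθdef]
    have : 0 < 1 / (2 * ν) := by positivity
    linarith
  set m : ℝ := θ ^ (-(2 / (ν + 1))) with hmdef
  have hm0 : 0 < m := Real.rpow_pos_of_pos hθ0 _
  have hm1 : 1 < m := by
    rw [hmdef]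
    apply Real.one_lt_rpow_iff_of_pos hθ0 |>.mpr
    right
    constructor
    · exact hθ1
    · have : (0:ℝ) < 2 / (ν + 1) := by positivity
      linarith
  set X : ℝ := 1 + Real.sqrt ν + Real.sqrt (ν / (m - 1)) with hXdef
  have hX0 : 0 < X := by
    have h1 : 0 ≤ Real.sqrt ν := Real.sqrt_nonneg _
    have h2 : 0 ≤ Real.sqrt (ν / (m - 1)) := Real.sqrt_nonneg _
    rw [hXdef]; linarith
  have hν1 : (0:ℝ) < ν - 1 := by linarith
  refine ⟨A / (2 * ν * (ν - 1)), 2 * A / (ν - 1), X,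
    div_pos hA (by nlinarith), ?_, hX0, ?_⟩
  · rw [div_le_div_iff₀ (by nlinarith) hν1]
    nlinarith [mul_pos hA hν1, mul_pos (mul_pos hA hν1) hν0]
  intro x hx
  have hmx : (0:ℝ) < -x := by linarith
  have habs : |x| = -x := abs_of_neg (by linarith)
  have hx1 : 1 ≤ -x := by
    have h1 : 0 ≤ Real.sqrt ν := Real.sqrt_nonneg _
    have h2 : 0 ≤ Real.sqrt (ν / (m - 1)) := Real.sqrt_nonneg _
    rw [hXdef] at hx; linarith
  have hxν : ν ≤ x ^ 2 := by
    have h1 : 0 ≤ Real.sqrt ν := Real.sqrt_nonneg _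
    have h2 : 0 ≤ Real.sqrt (ν / (m - 1)) := Real.sqrt_nonneg _
    have h3 : Real.sqrt ν ≤ -x := by rw [hXdef] at hx; linarith
    nlinarith [Real.mul_self_sqrt hν0.le,
      mul_le_mul h3 h3 h1 (by linarith : (0:ℝ) ≤ -x)]
  have hm1' : (0:ℝ) < m - 1 := by linarith
  have hxm : ν / (m - 1) ≤ x ^ 2 := by
    have h1 : 0 ≤ Real.sqrt ν := Real.sqrt_nonneg _
    have h2 : 0 ≤ Real.sqrt (ν / (m - 1)) := Real.sqrt_nonneg _
    have h3 : Real.sqrt (ν / (m - 1)) ≤ -x := by rw [hXdef] at hx; linarith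
    nlinarith [Real.mul_self_sqrt (le_of_lt (div_pos hν0 hm1')),
      mul_le_mul h3 h3 h2 (by linarith : (0:ℝ) ≤ -x)]
  -- rpow bookkeeping for B := -x
  have hB1 : (-x) ^ (1 - ν) = (-x) * (-x) ^ (-ν) := by
    rw [show (1 : ℝ) - ν = 1 + -ν by ring, Real.rpow_add hmx, Real.rpow_one]
  have hB2 : x ^ 2 * (-x) ^ (-(ν + 1)) = (-x) ^ (1 - ν) := by
    have h2 : x ^ 2 = (-x) ^ ((2:ℕ):ℝ) := by
      rw [Real.rpow_natCast]; ring
    rw [h2, ← Real.rpow_add hmx]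
    congr 1
    push_cast
    ring
  -- lower bound on tpdf at x
  have hpdf_ge : θ * A * (-x) ^ (-(ν + 1)) ≤ tpdf ν x := by
    have hb : (0:ℝ) < x ^ 2 / ν := div_pos (by nlinarith) hν0
    have hle : 1 + x ^ 2 / ν ≤ m * (x ^ 2 / ν) := by
      have h1 : ν ≤ (m - 1) * x ^ 2 := by
        rw [div_le_iff₀ (by linarith)] at hxm; linarith [hxm]
      have h2 : 1 ≤ (m - 1) * x ^ 2 / ν := by
        rw [le_div_iff₀ hν0]; linarith
      have h3 : 1 + x ^ 2 / ν ≤ (m - 1) * x ^ 2 / ν + x ^ 2 / ν := by linarith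
      calc 1 + x ^ 2 / ν ≤ (m - 1) * x ^ 2 / ν + x ^ 2 / ν := h3
        _ = m * (x ^ 2 / ν) := by ring
    have h4 : (m * (x ^ 2 / ν)) ^ (-p) ≤ (1 + x ^ 2 / ν) ^ (-p) :=
      Real.rpow_le_rpow_of_nonpos (by positivity) hle (by linarith)
    have hν1ne : ν + 1 ≠ 0 := by linarith
    have hexp1 : -(2 / (ν + 1)) * -p = 1 := by
      rw [hp]; field_simp
    have h5 : (m * (x ^ 2 / ν)) ^ (-p) = θ * (x ^ 2 / ν) ^ (-p) := by
      rw [Real.mul_rpow hm0.le hb.le, hmdef, ← Real.rpow_mul hθ0.le, hexp1, Real.rpow_one]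
    calc θ * A * (-x) ^ (-(ν + 1)) = θ * (K * (ν ^ p * (-x) ^ (-(ν + 1)))) := by
          rw [hAdef]; ring
      _ = θ * (K * (x ^ 2 / ν) ^ (-p)) := by rw [← hEq x (by linarith)]
      _ = K * (θ * (x ^ 2 / ν) ^ (-p)) := by ring
      _ = K * (m * (x ^ 2 / ν)) ^ (-p) := by rw [h5]
      _ ≤ K * (1 + x ^ 2 / ν) ^ (-p) := mul_le_mul_of_nonneg_left h4 hK.le
      _ = tpdf ν x := rfl
  have hpdfx_le : tpdf ν x ≤ A * (-x) ^ (-(ν + 1)) := hpdf_le x (by linarith)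
  have hcdfx_le : tcdf ν x ≤ A * (-x) ^ (-ν) / ν := hcdf_le x (by linarith)
  have hcdfx_nn : 0 ≤ tcdf ν x := hcdf_nonneg x
  have hBpow_pos : (0:ℝ) < (-x) ^ (1 - ν) := Real.rpow_pos_of_pos hmx _
  have hBν_pos : (0:ℝ) < (-x) ^ (-ν) := Real.rpow_pos_of_pos hmx _
  have hBν1_pos : (0:ℝ) < (-x) ^ (-(ν + 1)) := Real.rpow_pos_of_pos hmx _
  -- first term bounds
  have hT1_ge : -(A / ν) * (-x) ^ (1 - ν) ≤ x * tcdf ν x := by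
    have := mul_le_mul_of_nonneg_left hcdfx_le hmx.le
    -- (-x) * tcdf ≤ (-x) * (A * (-x)^(-ν) / ν)
    have h2 : (-x) * (A * (-x) ^ (-ν) / ν) = (A / ν) * (-x) ^ (1 - ν) := by
      rw [hB1]; ring
    nlinarith [this]
  have hT1_le : x * tcdf ν x ≤ 0 := mul_nonpos_of_nonpos_of_nonneg (by linarith) hcdfx_nn
  -- second term bounds
  have hfrac_nn : (0:ℝ) ≤ ν / (ν - 1) := by positivity
  have hT2_ge : θ * A / (ν - 1) * (-x) ^ (1 - ν) ≤ (ν + x ^ 2) / (ν - 1) * tpdf ν x := by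
    have h1 : x ^ 2 / (ν - 1) * tpdf ν x ≤ (ν + x ^ 2) / (ν - 1) * tpdf ν x := by
      apply mul_le_mul_of_nonneg_right _ (hpdf_nonneg x)
      apply div_le_div_of_nonneg_right (by linarith) (by linarith)
    have h2 : θ * A / (ν - 1) * (-x) ^ (1 - ν) ≤ x ^ 2 / (ν - 1) * tpdf ν x := by
      have h3 := mul_le_mul_of_nonneg_left hpdf_ge
        (by positivity : (0:ℝ) ≤ x ^ 2 / (ν - 1))
      calc θ * A / (ν - 1) * (-x) ^ (1 - ν)
          = x ^ 2 / (ν - 1) * (θ * A * (-x) ^ (-(ν + 1))) := by rw [← hB2]; ring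
        _ ≤ x ^ 2 / (ν - 1) * tpdf ν x := h3
    linarith
  have hT2_le : (ν + x ^ 2) / (ν - 1) * tpdf ν x ≤ 2 * A / (ν - 1) * (-x) ^ (1 - ν) := by
    have h1 : (ν + x ^ 2) / (ν - 1) * tpdf ν x ≤ (2 * x ^ 2) / (ν - 1) * tpdf ν x := by
      apply mul_le_mul_of_nonneg_right _ (hpdf_nonneg x)
      apply div_le_div_of_nonneg_right (by linarith) (by linarith)
    have h2 : (2 * x ^ 2) / (ν - 1) * tpdf ν x ≤ 2 * A / (ν - 1) * (-x) ^ (1 - ν) := by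
      have h3 := mul_le_mul_of_nonneg_left hpdfx_le
        (by positivity : (0:ℝ) ≤ 2 * x ^ 2 / (ν - 1))
      calc (2 * x ^ 2) / (ν - 1) * tpdf ν x
          ≤ 2 * x ^ 2 / (ν - 1) * (A * (-x) ^ (-(ν + 1))) := h3
        _ = 2 * A / (ν - 1) * (x ^ 2 * (-x) ^ (-(ν + 1))) := by ring
        _ = 2 * A / (ν - 1) * (-x) ^ (1 - ν) := by rw [hB2]
    linarith
  rw [habs]
  constructor
  · have hkey : A / (2 * ν * (ν - 1)) * (-x) ^ (1 - ν)
        = θ * A / (ν - 1) * (-x) ^ (1 - ν) - A / ν * (-x) ^ (1 - ν) := by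
      rw [hθdef]
      field_simp
      ring
    rw [hkey]
    have := hT1_ge
    linarith
  · linarith
end
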